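/- arXiv:math/0110217 — 7 statements merged into one kernel-verified Lean document; each statement's English description precedes it below -/
import Mathlib

section
/- For every t ∈ [0, 1/2] one has (4/π)·∫_0^{π/4} H(t/(cos ω + sin ω)) dω = (4/π)·∫_{π/4}^{π/2} (1 − √2·t/(ζ(2)·sin ω)) dω = 1 − (4·√2·ln(1+√2)/(π·ζ(2)))·t. In particular the limiting repartition function F(t) = (4/π)·∫_0^{π/4} H(t/(cos ω + sin ω)) dω is linear on [0, 1/2]. -/
open Real MeasureTheory Set

noncomputable def zeta2 : ℝ := Real.pi ^ 2 / 6

noncomputable def psi (x : ℝ) : ℝ := ((1 - x) / x) * (1 + Real.log (x / (1 - x)))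

/-- The limiting repartition function, with `H 0 = 1`. -/
noncomputable def Hlim (t : ℝ) : ℝ :=
  if t ≤ 1 / 2 then 1 - 2 * t / zeta2
  else if t ≤ 1 then (2 / zeta2) * ∫ x in t..1, psi x
  else 0

lemma zeta2_pos : 0 < zeta2 := by
  unfold zeta2; positivity

lemma sum_ge_one {ω : ℝ} (h0 : 0 ≤ ω) (h1 : ω ≤ Real.pi / 4) :
    1 ≤ Real.cos ω + Real.sin ω := by
  have hs : 0 ≤ Real.sin ω := Real.sin_nonneg_of_nonneg_of_le_pi h0 (by nlinarith [Real.pi_pos])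
  have hc : 0 ≤ Real.cos ω := Real.cos_nonneg_of_mem_Icc ⟨by nlinarith [Real.pi_pos], by nlinarith [Real.pi_pos]⟩
  have h2 : Real.sin ω ^ 2 + Real.cos ω ^ 2 = 1 := Real.sin_sq_add_cos_sq ω
  nlinarith [mul_nonneg hs hc]

lemma sin_shift (ω : ℝ) : Real.sqrt 2 * Real.sin (ω + Real.pi / 4)
    = Real.cos ω + Real.sin ω := by
  rw [Real.sin_add, Real.cos_pi_div_four, Real.sin_pi_div_four]
  have h2 : Real.sqrt 2 * Real.sqrt 2 = 2 := Real.mul_self_sqrt (by norm_num)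
  linear_combination (Real.sin ω + Real.cos ω) / 2 * h2

lemma integral_csc : ∫ ω in (Real.pi / 4)..(Real.pi / 2), (Real.sin ω)⁻¹
    = Real.log (1 + Real.sqrt 2) := by
  have hderiv : ∀ u ∈ Set.uIcc (Real.pi / 4) (Real.pi / 2),
      HasDerivAt (fun u => Real.log (Real.sin u / (1 + Real.cos u))) (Real.sin u)⁻¹ u := by
    intro u hu
    rw [Set.uIcc_of_le (by linarith [Real.pi_pos])] at hu
    obtain ⟨hu1, hu2⟩ := hu
    have hpi := Real.pi_pos
    have hsin : 0 < Real.sin u := Real.sin_pos_of_pos_of_lt_pi (by linarith) (by linarith)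
    have hcos : 0 ≤ Real.cos u := Real.cos_nonneg_of_mem_Icc ⟨by linarith, hu2⟩
    have hcos1 : (0:ℝ) < 1 + Real.cos u := by linarith
    have h1 := (Real.hasDerivAt_sin u).div ((hasDerivAt_const u (1:ℝ)).add (Real.hasDerivAt_cos u)) (ne_of_gt hcos1)
    have h2 := (Real.hasDerivAt_log (by positivity : Real.sin u / (1 + Real.cos u) ≠ 0)).comp u h1
    refine h2.congr_deriv ?_
    have hpyth : Real.sin u ^ 2 + Real.cos u ^ 2 = 1 := Real.sin_sq_add_cos_sq u
    simp only [Pi.add_apply]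
    field_simp
    nlinarith [hpyth]
  have hcont : IntervalIntegrable (fun ω => (Real.sin ω)⁻¹) volume (Real.pi / 4) (Real.pi / 2) := by
    apply ContinuousOn.intervalIntegrable
    apply ContinuousOn.inv₀ (Real.continuous_sin.continuousOn)
    intro u hu
    rw [Set.uIcc_of_le (by linarith [Real.pi_pos])] at hu
    exact ne_of_gt (Real.sin_pos_of_pos_of_lt_pi (by linarith [Real.pi_pos, hu.1]) (by linarith [Real.pi_pos, hu.2]))
  rw [intervalIntegral.integral_eq_sub_of_hasDerivAt hderiv hcont]
  rw [Real.sin_pi_div_two, Real.cos_pi_div_two, Real.sin_pi_div_four, Real.cos_pi_div_four]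
  have h2 : Real.sqrt 2 * Real.sqrt 2 = 2 := Real.mul_self_sqrt (by norm_num)
  have hs2 : (0:ℝ) < Real.sqrt 2 := Real.sqrt_pos.mpr (by norm_num)
  have key : Real.sqrt 2 / 2 / (1 + Real.sqrt 2 / 2) = (1 + Real.sqrt 2)⁻¹ := by
    rw [inv_eq_one_div, div_eq_div_iff (by positivity) (by positivity)]
    linear_combination h2 / 2
  rw [key, Real.log_inv]
  norm_num

theorem statement3 (t : ℝ) (ht : t ∈ Set.Icc (0 : ℝ) (1 / 2)) :
    (4 / Real.pi) * ∫ ω in (0 : ℝ)..(Real.pi / 4),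
        Hlim (t / (Real.cos ω + Real.sin ω))
      = (4 / Real.pi) * ∫ ω in (Real.pi / 4)..(Real.pi / 2),
          (1 - Real.sqrt 2 * t / (zeta2 * Real.sin ω)) ∧
    (4 / Real.pi) * ∫ ω in (0 : ℝ)..(Real.pi / 4),
        Hlim (t / (Real.cos ω + Real.sin ω))
      = 1 - (4 * Real.sqrt 2 * Real.log (1 + Real.sqrt 2) / (Real.pi * zeta2)) * t := by
  obtain ⟨ht0, ht1⟩ := ht
  have hpi := Real.pi_pos
  have hz := zeta2_pos
  have hs2 : (0:ℝ) < Real.sqrt 2 := Real.sqrt_pos.mpr (by norm_num)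
  -- step 1: rewrite integrand
  have key1 : (∫ ω in (0 : ℝ)..(Real.pi / 4), Hlim (t / (Real.cos ω + Real.sin ω)))
      = ∫ ω in (0 : ℝ)..(Real.pi / 4),
          (fun u => 1 - Real.sqrt 2 * t / (zeta2 * Real.sin u)) (ω + Real.pi / 4) := by
    apply intervalIntegral.integral_congr
    intro ω hω
    rw [Set.uIcc_of_le (by linarith)] at hω
    obtain ⟨hω0, hω1⟩ := hω
    have hge := sum_ge_one hω0 hω1
    have hpos : (0:ℝ) < Real.cos ω + Real.sin ω := by linarith
    have harg : t / (Real.cos ω + Real.sin ω) ≤ 1 / 2 := by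
      rw [div_le_iff₀ hpos]
      nlinarith
    simp only [Hlim, if_pos harg]
    have hshift := sin_shift ω
    have hsinpos : 0 < Real.sin (ω + Real.pi / 4) := by nlinarith
    rw [← hshift]
    set S := Real.sin (ω + Real.pi / 4) with hSdef
    have hs2' : Real.sqrt 2 ≠ 0 := ne_of_gt (Real.sqrt_pos.mpr (by norm_num))
    have h2 : Real.sqrt 2 * Real.sqrt 2 = 2 := Real.mul_self_sqrt (by norm_num)
    have hsne : S ≠ 0 := ne_of_gt hsinpos
    have hzne : zeta2 ≠ 0 := ne_of_gt zeta2_pos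
    field_simp
    linear_combination t * h2
  have key2 : (∫ ω in (0 : ℝ)..(Real.pi / 4),
          (fun u => 1 - Real.sqrt 2 * t / (zeta2 * Real.sin u)) (ω + Real.pi / 4))
      = ∫ ω in (Real.pi / 4)..(Real.pi / 2),
          (1 - Real.sqrt 2 * t / (zeta2 * Real.sin ω)) := by
    have h := intervalIntegral.integral_comp_add_right (a := (0:ℝ)) (b := Real.pi / 4)
      (f := fun u => 1 - Real.sqrt 2 * t / (zeta2 * Real.sin u)) (Real.pi / 4)
    rw [zero_add, show Real.pi / 4 + Real.pi / 4 = Real.pi / 2 by ring] at h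
    exact h
  -- step 2: value
  have hint : IntervalIntegrable (fun ω => (Real.sin ω)⁻¹) volume (Real.pi / 4) (Real.pi / 2) := by
    apply ContinuousOn.intervalIntegrable
    apply ContinuousOn.inv₀ (Real.continuous_sin.continuousOn)
    intro u hu
    rw [Set.uIcc_of_le (by linarith)] at hu
    exact ne_of_gt (Real.sin_pos_of_pos_of_lt_pi (by linarith [hu.1]) (by linarith [hu.2]))
  have key3 : (∫ ω in (Real.pi / 4)..(Real.pi / 2),
      (1 - Real.sqrt 2 * t / (zeta2 * Real.sin ω)))
      = Real.pi / 4 - (Real.sqrt 2 * t / zeta2) * Real.log (1 + Real.sqrt 2) := by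
    have : (fun ω => 1 - Real.sqrt 2 * t / (zeta2 * Real.sin ω))
        = fun ω => 1 - (Real.sqrt 2 * t / zeta2) * (Real.sin ω)⁻¹ := by
      funext ω
      rw [div_mul_eq_div_div_swap]
      ring
    rw [this, intervalIntegral.integral_sub intervalIntegrable_const (hint.const_mul _),
      intervalIntegral.integral_const, intervalIntegral.integral_const_mul, integral_csc]
    simp [smul_eq_mul]
    ring
  constructor
  · rw [key1, key2]
  · rw [key1, key2, key3]
    field_simp
end

section
/- ∫_{1/2}^1 ψ(x) dx = (ζ(2) − 1)/2 = π²/12 − 1/2. -/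
open Real MeasureTheory Set intervalIntegral Filter

lemma intInt_log : IntervalIntegrable Real.log volume 0 (1/2) := by
  rw [intervalIntegrable_iff_integrableOn_Ioc_of_le (by norm_num)]
  have hg : IntegrableOn (fun x : ℝ => 2 * x ^ (-(1/2) : ℝ)) (Ioc 0 (1/2)) volume := by
    have h := (intervalIntegrable_rpow' (a := 0) (b := 1/2) (r := -(1/2)) (by norm_num))
    rw [intervalIntegrable_iff_integrableOn_Ioc_of_le (by norm_num)] at h
    exact h.const_mul 2
  refine hg.integrable.mono' (Real.measurable_log.aestronglyMeasurable) ?_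
  filter_upwards [ae_restrict_mem measurableSet_Ioc] with x hx
  have hx0 : 0 < x := hx.1
  have hx1 : x ≤ 1 := le_trans hx.2 (by norm_num)
  have hlog : Real.log x ≤ 0 := Real.log_nonpos hx0.le hx1
  rw [Real.norm_eq_abs, abs_of_nonpos hlog]
  have h1 : Real.log (x ^ (-(1/2) : ℝ)) = -(1/2) * Real.log x := Real.log_rpow hx0 _
  have h2 : Real.log (x ^ (-(1/2) : ℝ)) ≤ x ^ (-(1/2) : ℝ) - 1 :=
    Real.log_le_sub_one_of_pos (Real.rpow_pos_of_pos hx0 _)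
  nlinarith [Real.rpow_pos_of_pos hx0 (-(1/2) : ℝ)]

lemma int_log_half : ∫ x in (0:ℝ)..(1/2), Real.log x = -(Real.log 2)/2 - 1/2 := by
  have hF : ∀ x ∈ Ioo (0:ℝ) (1/2), HasDerivAt (fun x => x * Real.log x - x) (Real.log x) x := by
    intro x hx
    exact ((Real.hasDerivAt_mul_log hx.1.ne').sub (hasDerivAt_id x)).congr_deriv (by ring)
  have := integral_eq_sub_of_hasDerivAt_of_le (by norm_num)
    ((Real.continuous_mul_log.sub continuous_id).continuousOn) hF intInt_log
  rw [this]
  have h : Real.log (1/2) = -Real.log 2 := by rw [one_div, Real.log_inv]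
  simp [h]; ring

lemma hs2 : HasSum (fun n : ℕ => (1:ℝ)/((n:ℝ)+1)^2) (π^2/6) := by
  have h := (hasSum_nat_add_iff (f := fun n : ℕ => (1:ℝ)/(n:ℝ)^2) (g := π^2/6) 1).mpr
    (by simpa using hasSum_zeta_two)
  exact h.congr_fun (by intro n; push_cast; ring_nf)

lemma int_pow_Ioo (n : ℕ) : ∫ x in Ioo (0:ℝ) 1, x ^ n / ((n:ℝ)+1) = 1/((n:ℝ)+1)^2 := by
  rw [← integral_Ioc_eq_integral_Ioo, ← integral_of_le zero_le_one,
    intervalIntegral.integral_div, integral_pow]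
  have : ((n:ℝ)+1) ≠ 0 := by positivity
  field_simp
  ring

lemma intOn_pow (n : ℕ) : IntegrableOn (fun x : ℝ => x ^ n / ((n:ℝ)+1)) (Ioo 0 1) volume :=
  (((continuous_pow n).div_const _).integrableOn_Icc (a := 0) (b := 1)).mono_set
    Ioo_subset_Icc_self

lemma int_log_one : ∫ x in (0:ℝ)..1, Real.log (1-x) / x = -(π^2/6) := by
  rw [integral_of_le zero_le_one, integral_Ioc_eq_integral_Ioo]
  have hnorm : ∀ n : ℕ, ∫ x in Ioo (0:ℝ) 1, ‖x ^ n / ((n:ℝ)+1)‖ = 1/((n:ℝ)+1)^2 := by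
    intro n
    rw [setIntegral_congr_fun measurableSet_Ioo
      (fun x hx => norm_of_nonneg (div_nonneg (pow_nonneg hx.1.le n) (by positivity)))]
    exact int_pow_Ioo n
  have hsummable : Summable (fun n : ℕ =>
      ∫ x in Ioo (0:ℝ) 1, ‖x ^ n / ((n:ℝ)+1)‖) := by
    apply Summable.congr hs2.summable
    intro n; exact (hnorm n).symm
  have key := MeasureTheory.hasSum_integral_of_summable_integral_norm
    (F := fun (n : ℕ) (x : ℝ) => x ^ n / ((n:ℝ)+1))
    (μ := volume.restrict (Ioo 0 1)) (fun n => intOn_pow n) hsummable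
  have hts : ∫ x in Ioo (0:ℝ) 1, (∑' n : ℕ, x ^ n / ((n:ℝ)+1))
      = ∫ x in Ioo (0:ℝ) 1, -(Real.log (1-x) / x) := by
    apply setIntegral_congr_fun measurableSet_Ioo
    intro x hx
    have hx0 : x ≠ 0 := ne_of_gt hx.1
    have habs : |x| < 1 := abs_lt.mpr ⟨by linarith [hx.1], hx.2⟩
    have h := (Real.hasSum_pow_div_log_of_abs_lt_one habs).div_const x
    have heq : (fun n : ℕ => x ^ (n+1) / ((n:ℝ)+1) / x) = fun n : ℕ => x ^ n / ((n:ℝ)+1) := by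
      funext n; rw [pow_succ]; field_simp
    rw [heq] at h
    simp only []
    rw [h.tsum_eq, neg_div]
  rw [hts] at key
  have key2 : HasSum (fun n : ℕ => (1:ℝ)/((n:ℝ)+1)^2)
      (∫ x in Ioo (0:ℝ) 1, -(Real.log (1-x)/x)) :=
    key.congr_fun (fun n => (int_pow_Ioo n).symm)
  have h3 := hs2.unique key2
  rw [MeasureTheory.integral_neg] at h3
  linarith [h3]


lemma intA : IntervalIntegrable (fun x => Real.log x / (1-x)) volume 0 (1/2) := by
  have hc : ContinuousOn (fun x : ℝ => (1-x)⁻¹) (uIcc 0 (1/2)) := by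
    apply ContinuousOn.inv₀ (by fun_prop)
    intro x hx
    rw [uIcc_of_le (by norm_num)] at hx
    have := hx.2
    norm_num at this ⊢
    linarith
  simpa [div_eq_mul_inv] using intInt_log.mul_continuousOn hc

lemma intB : IntervalIntegrable (fun x => Real.log (1-x) / x) volume 0 (1/2) := by
  rw [intervalIntegrable_iff_integrableOn_Ioc_of_le (by norm_num)]
  have hmeas : AEStronglyMeasurable (fun x : ℝ => Real.log (1-x) / x)
      (volume.restrict (Ioc 0 (1/2))) := by
    apply Measurable.aestronglyMeasurable
    exact (Real.measurable_log.comp (measurable_const.sub measurable_id)).div measurable_id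
  have hconst : IntegrableOn (fun _ : ℝ => (2:ℝ)) (Ioc 0 (1/2)) volume :=
    integrableOn_const measure_Ioc_lt_top.ne
  refine hconst.integrable.mono' hmeas ?_
  · filter_upwards [ae_restrict_mem measurableSet_Ioc] with x hx
    have hx0 : 0 < x := hx.1
    have hx1 : x ≤ 1/2 := hx.2
    have h1x : (0:ℝ) < 1 - x := by linarith
    have hlog : Real.log (1-x) ≤ 0 := Real.log_nonpos (by linarith) (by linarith)
    have hkey : -Real.log (1-x) ≤ 2 * x := by
      have h2 : Real.log ((1-x)⁻¹) ≤ (1-x)⁻¹ - 1 :=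
        Real.log_le_sub_one_of_pos (by positivity)
      rw [Real.log_inv] at h2
      have h3 : (1-x)⁻¹ - 1 = x / (1-x) := by field_simp; ring
      have h4 : x / (1-x) ≤ 2 * x := by
        rw [div_le_iff₀ h1x]; nlinarith
      linarith
    rw [Real.norm_eq_abs, abs_div, abs_of_nonpos hlog, abs_of_pos hx0,
      div_le_iff₀ hx0]
    show -Real.log (1-x) ≤ 2 * x
    linarith

lemma tendsto_G : Filter.Tendsto (fun x => Real.log x * Real.log (1-x)) (nhdsWithin 0 (Ioi 0)) (nhds 0) := by
  have t1 : Filter.Tendsto (fun x : ℝ => x * Real.log x) (nhdsWithin 0 (Ioi 0)) (nhds 0) := by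
    simpa using (Real.continuous_mul_log.tendsto 0).mono_left nhdsWithin_le_nhds
  have hd : HasDerivAt (fun x : ℝ => Real.log (1-x)) (-1) 0 := by
    have h := (Real.hasDerivAt_log (by norm_num : (1:ℝ) - 0 ≠ 0)).comp 0
      ((hasDerivAt_const 0 (1:ℝ)).sub (hasDerivAt_id 0))
    exact h.congr_deriv (by norm_num)
  have t2 : Filter.Tendsto (fun x : ℝ => Real.log (1-x) / x) (nhdsWithin 0 (Ioi 0)) (nhds (-1)) := by
    have h := hasDerivAt_iff_tendsto_slope.mp hd
    have h2 := h.mono_left (nhdsWithin_mono 0 (fun x hx => ne_of_gt hx : Ioi (0:ℝ) ⊆ {0}ᶜ))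
    apply h2.congr'
    filter_upwards [self_mem_nhdsWithin] with x hx
    simp [slope_def_field, (mem_Ioi.mp hx).ne', div_eq_mul_inv]
  have := t1.mul t2
  rw [zero_mul] at this
  apply this.congr'
  filter_upwards [self_mem_nhdsWithin] with x hx
  have : x ≠ 0 := ne_of_gt hx
  field_simp

lemma contG : ContinuousOn (fun x => Real.log x * Real.log (1-x)) (Icc (0:ℝ) (1/2)) := by
  intro x hx
  rcases eq_or_ne x 0 with rfl | hx0
  · rw [← continuousWithinAt_diff_self]
    have hsub : Icc (0:ℝ) (1/2) \ {0} ⊆ Ioi 0 := by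
      intro y hy
      exact lt_of_le_of_ne hy.1.1 (Ne.symm hy.2)
    have := tendsto_G.mono_left (nhdsWithin_mono 0 hsub)
    unfold ContinuousWithinAt
    simpa using this
  · have h1 : x ∈ Ioi (0:ℝ) := lt_of_le_of_ne hx.1 (Ne.symm hx0)
    have h2 : (1:ℝ) - x ≠ 0 := by
      have := hx.2; norm_num at this ⊢; linarith
    exact (((Real.continuousAt_log hx0).mul
      ((Real.continuousAt_log h2).comp
        ((continuous_const.sub continuous_id).continuousAt))).continuousWithinAt)

lemma derivG : ∀ x ∈ Ioo (0:ℝ) (1/2), HasDerivAt (fun x => Real.log x * Real.log (1-x))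
    (Real.log (1-x)/x - Real.log x/(1-x)) x := by
  intro x hx
  have hx0 : x ≠ 0 := ne_of_gt hx.1
  have h1x : (1:ℝ) - x ≠ 0 := by have := hx.2; intro h; nlinarith
  have hd1 : HasDerivAt Real.log x⁻¹ x := Real.hasDerivAt_log hx0
  have hd2 : HasDerivAt (fun x : ℝ => Real.log (1-x)) (-(1-x)⁻¹) x := by
    have h := (Real.hasDerivAt_log h1x).comp x
      ((hasDerivAt_const x (1:ℝ)).sub (hasDerivAt_id x))
    exact h.congr_deriv (by ring)
  have := hd1.mul hd2
  refine this.congr_deriv ?_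
  field_simp
  ring

lemma reflection_log : (∫ x in (0:ℝ)..(1/2), Real.log (1-x)/x)
    - (∫ x in (0:ℝ)..(1/2), Real.log x/(1-x)) = (Real.log 2)^2 := by
  have hint : IntervalIntegrable (fun x => Real.log (1-x)/x - Real.log x/(1-x))
      volume 0 (1/2) := intB.sub intA
  have h := integral_eq_sub_of_hasDerivAt_of_le (by norm_num) contG derivG hint
  rw [intervalIntegral.integral_sub intB intA] at h
  rw [h]
  have hlog : Real.log (1/2) = -Real.log 2 := by rw [one_div, Real.log_inv]
  norm_num [hlog]
  ring


lemma intB2 : IntervalIntegrable (fun x => Real.log (1-x) / x) volume (1/2) 1 := by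
  have h := intA.comp_sub_left 1
  norm_num at h
  exact h.symm

lemma sym_J : ∫ x in (1/2:ℝ)..1, Real.log (1-x)/x = ∫ x in (0:ℝ)..(1/2), Real.log x/(1-x) := by
  have h := integral_comp_sub_left (a := (1/2:ℝ)) (b := 1) (fun u => Real.log u/(1-u)) 1
  norm_num at h
  convert h using 2

lemma Jval : ∫ x in (1/2:ℝ)..1, Real.log (1-x)/x = -(π^2/12) - (Real.log 2)^2/2 := by
  have hadd := integral_add_adjacent_intervals intB intB2
  rw [int_log_one] at hadd
  have h1 := sym_J
  have h2 := reflection_log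
  linarith

-- elementary FTC piece
lemma intEint : IntervalIntegrable (fun x => (x:ℝ)⁻¹ - 1 + Real.log x/x - Real.log x)
    volume (1/2) 1 := by
  apply ContinuousOn.intervalIntegrable
  rw [uIcc_of_le (by norm_num)]
  have hlogc : ContinuousOn Real.log (Icc (1/2:ℝ) 1) := by
    apply Real.continuousOn_log.mono
    intro x hx; have := hx.1; simp; intro h; rw [h] at this; norm_num at this
  have hne : ∀ x ∈ Icc (1/2:ℝ) 1, x ≠ 0 := by
    intro x hx h; have := hx.1; rw [h] at this; norm_num at this
  exact (((continuousOn_id.inv₀ hne).sub continuousOn_const).add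
    (hlogc.div continuousOn_id hne)).sub hlogc

lemma intE : ∫ x in (1/2:ℝ)..1, (x⁻¹ - 1 + Real.log x/x - Real.log x)
    = Real.log 2/2 - (Real.log 2)^2/2 := by
  have hderiv : ∀ x ∈ Ioo (1/2:ℝ) 1, HasDerivAt
      (fun x => Real.log x + (Real.log x)^2/2 - x * Real.log x)
      (x⁻¹ - 1 + Real.log x/x - Real.log x) x := by
    intro x hx
    have hx0 : x ≠ 0 := by have := hx.1; positivity
    have h1 : HasDerivAt Real.log x⁻¹ x := Real.hasDerivAt_log hx0
    have h2 : HasDerivAt (fun x => (Real.log x)^2/2) (Real.log x * x⁻¹) x := by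
      have := ((h1.pow 2).div_const 2)
      refine this.congr_deriv ?_
      field_simp
      ring
    have h3 : HasDerivAt (fun x => x * Real.log x) (Real.log x + 1) x :=
      Real.hasDerivAt_mul_log hx0
    have := (h1.add h2).sub h3
    refine this.congr_deriv ?_
    field_simp
    ring
  have hcont : ContinuousOn (fun x => Real.log x + (Real.log x)^2/2 - x * Real.log x)
      (Icc (1/2:ℝ) 1) := by
    apply ContinuousOn.sub
    · apply ContinuousOn.add
      · apply Real.continuousOn_log.mono
        intro x hx; have := hx.1; simp; intro h; rw [h] at this; norm_num at this
      · apply ContinuousOn.div_const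
        apply ContinuousOn.pow
        apply Real.continuousOn_log.mono
        intro x hx; have := hx.1; simp; intro h; rw [h] at this; norm_num at this
    · exact Real.continuous_mul_log.continuousOn
  have h := integral_eq_sub_of_hasDerivAt_of_le (by norm_num) hcont hderiv intEint
  rw [h]
  have hlog : Real.log (1/2) = -Real.log 2 := by rw [one_div, Real.log_inv]
  norm_num [hlog]
  ring

lemma int_log1x : ∫ x in (1/2:ℝ)..1, Real.log (1-x) = -Real.log 2/2 - 1/2 := by
  have h := integral_comp_sub_left (a := (1/2:ℝ)) (b := 1) Real.log 1
  simp only [show (1:ℝ)-1 = 0 by norm_num, show (1:ℝ)-1/2 = 1/2 by norm_num] at h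
  rw [h, int_log_half]


theorem statement4 :
    (∫ x in (1 / 2 : ℝ)..1, psi x) = (zeta2 - 1) / 2 ∧
    (zeta2 - 1) / 2 = Real.pi ^ 2 / 12 - 1 / 2 := by
  constructor
  · have hcongr : ∫ x in (1/2:ℝ)..1, psi x
        = ∫ x in (1/2:ℝ)..1, ((x⁻¹ - 1 + Real.log x/x - Real.log x)
            + (Real.log (1-x) - Real.log (1-x)/x)) := by
      apply intervalIntegral.integral_congr
      intro x hx
      rw [uIcc_of_le (by norm_num)] at hx
      have hx0 : x ≠ 0 := by have := hx.1; positivity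
      rcases eq_or_lt_of_le hx.2 with rfl | hlt
      · simp [psi]
      · have h1x : (1:ℝ) - x ≠ 0 := by intro h; nlinarith
        unfold psi
        rw [Real.log_div hx0 h1x]
        field_simp
        ring
    have hint2 : IntervalIntegrable (fun x => Real.log (1-x)) volume (1/2) 1 := by
      have h := intInt_log.comp_sub_left 1
      norm_num at h
      exact h.symm
    rw [hcongr, intervalIntegral.integral_add intEint (hint2.sub intB2),
      intervalIntegral.integral_sub hint2 intB2, intE, int_log1x, Jval]
    unfold zeta2
    ring
  · unfold zeta2; ring
end

section
/- Let Q ≥ 2 be an integer and let a′/q′ < a/q < a″/q″ be three consecutive Farey fractions of order Q (in lowest terms, so that q ≥ 2 and 1 ≤ a ≤ q−1). Then q′ = q·⌊(Q − ā)/q⌋ + ā and q″ = q·⌊(Q + ā)/q⌋ − ā, where ā is the multiplicative inverse of a modulo q. -/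
open Real

/-- The set of Farey fractions of order `Q`: rationals in `[0,1]` whose
(reduced) denominator is at most `Q`. -/
def Farey (Q : ℕ) : Set ℚ := {x : ℚ | 0 ≤ x ∧ x ≤ 1 ∧ x.den ≤ Q}

/-- `x` and `y` are consecutive elements of the Farey sequence of order `Q`. -/
def FareyConsec (Q : ℕ) (x y : ℚ) : Prop :=
  x ∈ Farey Q ∧ y ∈ Farey Q ∧ x < y ∧ ∀ z ∈ Farey Q, ¬(x < z ∧ z < y)

/-- No Farey fraction of order `Q` lies strictly between two unimodular
fractions whose denominators sum to more than `Q`. -/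
lemma farey_between (Q : ℕ) (a q p r : ℤ) (hq : 0 < q) (hr : 0 < r)
    (hdet : a * r - p * q = 1) (hQ : (Q : ℤ) < q + r)
    (z : ℚ) (hz : z ∈ Farey Q) : ¬((p : ℚ) / r < z ∧ z < (a : ℚ) / q) := by
  rintro ⟨h1, h2⟩
  obtain ⟨hz0, hz1, hzden⟩ := hz
  obtain ⟨b, hb⟩ : ∃ b : ℤ, b = z.num := ⟨_, rfl⟩
  obtain ⟨c, hc⟩ : ∃ c : ℤ, c = (z.den : ℤ) := ⟨_, rfl⟩
  have hc0 : (0 : ℤ) < c := by rw [hc]; exact_mod_cast z.pos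
  have hzq : z = (b : ℚ) / (c : ℚ) := by
    rw [hb, hc]; push_cast; exact (Rat.num_div_den z).symm
  rw [hzq] at h1 h2
  have hrQ : (0 : ℚ) < (r : ℚ) := by exact_mod_cast hr
  have hqQ : (0 : ℚ) < (q : ℚ) := by exact_mod_cast hq
  have hcQ : (0 : ℚ) < (c : ℚ) := by exact_mod_cast hc0
  rw [div_lt_div_iff₀ hrQ hcQ] at h1
  rw [div_lt_div_iff₀ hcQ hqQ] at h2
  have hi1 : p * c < b * r := by exact_mod_cast h1
  have hi2 : b * q < a * c := by exact_mod_cast h2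
  have hi1' : p * c + 1 ≤ b * r := hi1
  have hi2' : b * q + 1 ≤ a * c := hi2
  have e : c * (a * r - p * q) = c := by rw [hdet]; ring
  have hcU : c ≤ (Q : ℤ) := by rw [hc]; exact_mod_cast hzden
  have k1 : q * (p * c + 1) ≤ q * (b * r) := by
    exact mul_le_mul_of_nonneg_left hi1' hq.le
  have k2 : r * (b * q + 1) ≤ r * (a * c) := by
    exact mul_le_mul_of_nonneg_left hi2' hr.le
  nlinarith [k1, k2, e]

lemma mem_farey_of (Q : ℕ) (p r : ℤ) (hr : 0 < r) (hp0 : 0 ≤ p) (hpr : p ≤ r)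
    (hco : IsCoprime p r) (hrQ : r ≤ (Q : ℤ)) : (p : ℚ) / r ∈ Farey Q := by
  have hrQ' : (0 : ℚ) < (r : ℚ) := by exact_mod_cast hr
  refine ⟨div_nonneg (by exact_mod_cast hp0) hrQ'.le, ?_, ?_⟩
  · rw [div_le_one hrQ']; exact_mod_cast hpr
  · have hg : Nat.Coprime p.natAbs r.natAbs :=
      Int.isCoprime_iff_gcd_eq_one.mp hco
    have hd := Rat.den_div_eq_of_coprime hr hg
    have : (((p : ℚ) / r).den : ℤ) ≤ (Q : ℤ) := by rw [hd]; exact hrQ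
    exact_mod_cast this

lemma farey_neighbor_left (Q : ℕ) (a q p r : ℤ) (hq : 0 < q) (hr : 0 < r)
    (hdet : a * r - p * q = 1) (hrQ : r ≤ (Q : ℤ)) (hQ : (Q : ℤ) < q + r)
    (hp0 : 0 ≤ p) (hpr : p ≤ r)
    (x : ℚ) (hx : x ∈ Farey Q) (hxlt : x < (a : ℚ) / q)
    (hnb : ∀ z ∈ Farey Q, ¬(x < z ∧ z < (a : ℚ) / q)) : x = (p : ℚ) / r := by
  have hco : IsCoprime p r := ⟨-q, a, by linear_combination hdet⟩
  have hmem : (p : ℚ) / r ∈ Farey Q := mem_farey_of Q p r hr hp0 hpr hco hrQ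
  have hlt : (p : ℚ) / r < (a : ℚ) / q := by
    rw [div_lt_div_iff₀ (by exact_mod_cast hr) (by exact_mod_cast hq)]
    exact_mod_cast (by omega : p * q < a * r)
  rcases lt_trichotomy x ((p : ℚ) / r) with h | h | h
  · exact absurd ⟨h, hlt⟩ (hnb _ hmem)
  · exact h
  · exact absurd ⟨h, hxlt⟩ (farey_between Q a q p r hq hr hdet hQ x hx)

lemma farey_neighbor_right (Q : ℕ) (a q p r : ℤ) (hq : 0 < q) (hr : 0 < r)
    (hdet : p * q - a * r = 1) (hrQ : r ≤ (Q : ℤ)) (hQ : (Q : ℤ) < q + r)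
    (hp0 : 0 ≤ p) (hpr : p ≤ r)
    (x : ℚ) (hx : x ∈ Farey Q) (hxgt : (a : ℚ) / q < x)
    (hnb : ∀ z ∈ Farey Q, ¬((a : ℚ) / q < z ∧ z < x)) : x = (p : ℚ) / r := by
  have hco : IsCoprime p r := ⟨q, -a, by linear_combination hdet⟩
  have hmem : (p : ℚ) / r ∈ Farey Q := mem_farey_of Q p r hr hp0 hpr hco hrQ
  have hlt : (a : ℚ) / q < (p : ℚ) / r := by
    rw [div_lt_div_iff₀ (by exact_mod_cast hq) (by exact_mod_cast hr)]
    exact_mod_cast (by omega : a * r < p * q)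
  rcases lt_trichotomy x ((p : ℚ) / r) with h | h | h
  · exact absurd ⟨hxgt, h⟩
      (farey_between Q p r a q hr hq (by linarith) (by omega) x hx)
  · exact h
  · exact absurd ⟨hlt, h⟩ (hnb _ hmem)

set_option maxHeartbeats 1000000 in
theorem statement7 (Q : ℕ) (hQ : 2 ≤ Q)
    (q q' q'' a a' a'' abar : ℤ)
    (hq : 2 ≤ q) (ha1 : 1 ≤ a) (ha2 : a ≤ q - 1)
    (hq' : 1 ≤ q') (hq'' : 1 ≤ q'')
    (ha'1 : 0 ≤ a') (ha'2 : a' ≤ q') (ha''1 : 0 ≤ a'') (ha''2 : a'' ≤ q'')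
    (hco : Int.gcd a q = 1) (hco' : Int.gcd a' q' = 1) (hco'' : Int.gcd a'' q'' = 1)
    (hcons1 : FareyConsec Q ((a' : ℚ) / (q' : ℚ)) ((a : ℚ) / (q : ℚ)))
    (hcons2 : FareyConsec Q ((a : ℚ) / (q : ℚ)) ((a'' : ℚ) / (q'' : ℚ)))
    (habar1 : 1 ≤ abar) (habar2 : abar ≤ q - 1)
    (habar : Int.ModEq q (a * abar) 1) :
    q' = q * ⌊((Q : ℚ) - (abar : ℚ)) / (q : ℚ)⌋ + abar ∧
    q'' = q * ⌊((Q : ℚ) + (abar : ℚ)) / (q : ℚ)⌋ - abar := by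
  have hq0 : (0 : ℤ) < q := by omega
  -- q ≤ Q
  have hqQ : q ≤ (Q : ℤ) := by
    have hg : Nat.Coprime a.natAbs q.natAbs := hco
    have hden := Rat.den_div_eq_of_coprime hq0 hg
    have h1 : (((a : ℚ) / q).den : ℤ) ≤ (Q : ℤ) := by
      exact_mod_cast hcons2.1.2.2
    omega
  obtain ⟨t, ht⟩ := habar.dvd
  -- floor computations
  have hqcast : ((q.toNat : ℕ) : ℚ) = (q : ℚ) := by
    rw [← Int.toNat_of_nonneg hq0.le]; push_cast; rw [Int.toNat_of_nonneg hq0.le]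
  have hfl1 : ⌊((Q : ℚ) - (abar : ℚ)) / (q : ℚ)⌋ = ((Q : ℤ) - abar) / q := by
    have h1 : ((Q : ℚ) - (abar : ℚ)) = (((Q : ℤ) - abar : ℤ) : ℚ) := by push_cast; ring
    rw [h1, ← hqcast, Rat.floor_intCast_div_natCast, Int.toNat_of_nonneg hq0.le]
  have hfl2 : ⌊((Q : ℚ) + (abar : ℚ)) / (q : ℚ)⌋ = ((Q : ℤ) + abar) / q := by
    have h1 : ((Q : ℚ) + (abar : ℚ)) = (((Q : ℤ) + abar : ℤ) : ℚ) := by push_cast; ring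
    rw [h1, ← hqcast, Rat.floor_intCast_div_natCast, Int.toNat_of_nonneg hq0.le]
  constructor
  · -- left neighbor
    have hmod := Int.mul_ediv_add_emod ((Q : ℤ) - abar) q
    set k : ℤ := ((Q : ℤ) - abar) / q with hk
    set r : ℤ := q * k + abar with hrdef
    have h1 : 0 ≤ ((Q : ℤ) - abar) % q := Int.emod_nonneg _ (by omega)
    have h2 : ((Q : ℤ) - abar) % q < q := Int.emod_lt_of_pos _ hq0
    have hrQ : r ≤ (Q : ℤ) := by omega
    have hQr : (Q : ℤ) < q + r := by omega
    have hr0 : 0 < r := by omega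
    have hdvd : q ∣ a * r - 1 := ⟨a * k - t, by rw [hrdef]; linear_combination -ht⟩
    set p : ℤ := (a * r - 1) / q with hp
    have hpq : q * p = a * r - 1 := Int.mul_ediv_cancel' hdvd
    have hdet : a * r - p * q = 1 := by linear_combination -hpq
    have hp0 : 0 ≤ p := Int.ediv_nonneg (by nlinarith) hq0.le
    have hpr : p ≤ r := by nlinarith [hpq, mul_le_mul_of_nonneg_right (show a ≤ q - 1 by omega) hr0.le]
    have hxeq : (a' : ℚ) / q' = (p : ℚ) / r :=
      farey_neighbor_left Q a q p r hq0 hr0 hdet hrQ hQr hp0 hpr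
        _ hcons1.1 hcons1.2.2.1 hcons1.2.2.2
    have hcoPR : Nat.Coprime p.natAbs r.natAbs :=
      Int.isCoprime_iff_gcd_eq_one.mp ⟨-q, a, by linear_combination hdet⟩
    have := Rat.div_int_inj (show (0 : ℤ) < q' by omega) hr0 hco' hcoPR hxeq
    rw [hfl1, this.2]
  · -- right neighbor
    have hmod := Int.mul_ediv_add_emod ((Q : ℤ) + abar) q
    set k : ℤ := ((Q : ℤ) + abar) / q with hk
    set r : ℤ := q * k - abar with hrdef
    have h1 : 0 ≤ ((Q : ℤ) + abar) % q := Int.emod_nonneg _ (by omega)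
    have h2 : ((Q : ℤ) + abar) % q < q := Int.emod_lt_of_pos _ hq0
    have hrQ : r ≤ (Q : ℤ) := by omega
    have hQr : (Q : ℤ) < q + r := by omega
    have hr0 : 0 < r := by omega
    have hdvd : q ∣ a * r + 1 := ⟨a * k + t, by rw [hrdef]; linear_combination ht⟩
    set p : ℤ := (a * r + 1) / q with hp
    have hpq : q * p = a * r + 1 := Int.mul_ediv_cancel' hdvd
    have hdet : p * q - a * r = 1 := by linear_combination hpq
    have hp0 : 0 ≤ p := Int.ediv_nonneg (by nlinarith) hq0.le
    have hpr : p ≤ r := by nlinarith [hpq, mul_le_mul_of_nonneg_right (show a ≤ q - 1 by omega) hr0.le]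
    have hxeq : (a'' : ℚ) / q'' = (p : ℚ) / r :=
      farey_neighbor_right Q a q p r hq0 hr0 hdet hrQ hQr hp0 hpr
        _ hcons2.2.1 hcons2.2.2.1 hcons2.2.2.2
    have hcoPR : Nat.Coprime p.natAbs r.natAbs :=
      Int.isCoprime_iff_gcd_eq_one.mp ⟨q, -a, by linear_combination hdet⟩
    have := Rat.div_int_inj (show (0 : ℤ) < q'' by omega) hr0 hco'' hcoPR hxeq
    rw [hfl2, this.2]
end

section
/- Let Q ≥ 2 be an integer and let a′/q′ < a/q < a″/q″ be three consecutive Farey fractions of order Q (in lowest terms, so q ≥ 2, 1 ≤ a ≤ q−1), and let ā be the multiplicative inverse of a mod q. Then: (i) q′ > q if and only if ā ≤ Q − q, and q′ < q if and only if ā > Q − q; (ii) q″ > q if and only if ā ≥ 2q − Q, and q″ < q if and only if ā < 2q − Q. Consequently: min(q′,q″) > q ⟺ 2q−Q ≤ ā ≤ Q−q; q′ < q < q″ ⟺ ā ≥ max(2q−Q, Q−q+1); q″ < q < q′ ⟺ ā ≤ min(2q−Q−1, Q−q); and q > max(q′,q″) ⟺ Q−q+1 ≤ ā ≤ 2q−Q−1.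 -/
open Real

lemma farey_pair (Q : ℕ) (a q a' q' : ℤ) (hq : 1 ≤ q) (hq' : 1 ≤ q')
    (ha1 : 1 ≤ a) (ha2 : a ≤ q) (ha'1 : 0 ≤ a') (ha'2 : a' ≤ q')
    (hco : Int.gcd a q = 1) (hco' : Int.gcd a' q' = 1)
    (hcons : FareyConsec Q ((a' : ℚ) / (q' : ℚ)) ((a : ℚ) / (q : ℚ))) :
    a * q' - a' * q = 1 ∧ (Q : ℤ) < q + q' := by
  have hq0 : (0:ℚ) < (q:ℚ) := by exact_mod_cast (by omega : (0:ℤ) < q)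
  have hq'0 : (0:ℚ) < (q':ℚ) := by exact_mod_cast (by omega : (0:ℤ) < q')
  obtain ⟨hxF, hyF, hxy, hbet⟩ := hcons
  -- denominators are at most Q
  have hdy : ((((a : ℚ) / (q : ℚ)).den : ℤ)) = q := Rat.den_div_eq_of_coprime (by omega) hco
  have hdx : ((((a' : ℚ) / (q' : ℚ)).den : ℤ)) = q' := Rat.den_div_eq_of_coprime (by omega) hco'
  have hqQ : q ≤ (Q:ℤ) := by
    have h := hyF.2.2
    have : ((((a : ℚ) / (q : ℚ)).den : ℤ)) ≤ (Q:ℤ) := by exact_mod_cast h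
    omega
  have hq'Q : q' ≤ (Q:ℤ) := by
    have h := hxF.2.2
    have : ((((a' : ℚ) / (q' : ℚ)).den : ℤ)) ≤ (Q:ℤ) := by exact_mod_cast h
    omega
  -- the determinant is positive
  have hD : 1 ≤ a * q' - a' * q := by
    rw [div_lt_div_iff₀ hq'0 hq0] at hxy
    have : a' * q < a * q' := by exact_mod_cast hxy
    omega
  -- Bezout
  obtain ⟨u, v, huv⟩ := Int.isCoprime_iff_gcd_eq_one.mpr hco
  set t : ℤ := ((Q:ℤ) - u) / q with ht
  set w : ℤ := u + q * t with hw
  have h1 : ((Q:ℤ) - u) % q + q * (((Q:ℤ) - u) / q) = (Q:ℤ) - u := Int.emod_add_mul_ediv _ _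
  have h2 : 0 ≤ ((Q:ℤ) - u) % q := Int.emod_nonneg _ (by omega)
  have h3 : ((Q:ℤ) - u) % q < q := Int.emod_lt_of_pos _ (by omega)
  have hwQ : w ≤ (Q:ℤ) := by simp only [hw, ht]; linarith
  have hwQ' : (Q:ℤ) - q < w := by simp only [hw, ht]; linarith
  have hw0 : 1 ≤ w := by linarith
  have hdvd : q ∣ a * w - 1 := ⟨a * t - v, by rw [hw]; linear_combination huv⟩
  obtain ⟨b, hb⟩ := hdvd
  have hb0 : 0 ≤ b := by nlinarith
  have hbw : b ≤ w := by nlinarith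
  have hcobw : Int.gcd b w = 1 :=
    Int.isCoprime_iff_gcd_eq_one.mp ⟨-q, a, by linear_combination hb⟩
  have hw0' : (0:ℚ) < (w:ℚ) := by exact_mod_cast (by omega : (0:ℤ) < w)
  set z : ℚ := (b:ℚ)/(w:ℚ) with hz
  have hzF : z ∈ Farey Q := by
    refine ⟨div_nonneg (by exact_mod_cast hb0) hw0'.le, ?_, ?_⟩
    · rw [hz, div_le_one hw0']; exact_mod_cast hbw
    · have hd := Rat.den_div_eq_of_coprime (by omega : (0:ℤ) < w) hcobw
      have : ((z.den : ℤ)) ≤ (Q:ℤ) := by rw [hz, hd]; exact hwQ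
      exact_mod_cast this
  have hzy : z < (a:ℚ)/(q:ℚ) := by
    rw [hz, div_lt_div_iff₀ hw0' hq0]
    exact_mod_cast (by nlinarith : (b:ℤ) * q < a * w)
  have hzx : z ≤ (a':ℚ)/(q':ℚ) := by
    by_contra h
    push_neg at h
    exact hbet z hzF ⟨h, hzy⟩
  rcases eq_or_lt_of_le hzx with heq | hlt
  · have hinj := Rat.div_int_inj (by omega : (0:ℤ) < w) (by omega : (0:ℤ) < q') hcobw hco' heq
    obtain ⟨hba, hwq⟩ := hinj
    constructor
    · rw [← hba, ← hwq]; linarith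
    · rw [← hwq] at *; linarith
  · exfalso
    rw [hz, div_lt_div_iff₀ hw0' hq'0] at hlt
    have h1' : (b:ℤ) * q' < a' * w := by exact_mod_cast hlt
    have hE : 1 ≤ a' * w - b * q' := by omega
    have key : q' = w * (a * q' - a' * q) + q * (a' * w - b * q') := by
      linear_combination (-q') * hb
    have h4 : w ≤ w * (a * q' - a' * q) := le_mul_of_one_le_right (by linarith) hD
    have h5 : q ≤ q * (a' * w - b * q') := le_mul_of_one_le_right (by linarith) hE
    linarith

lemma loc (Q q v r : ℤ) (hq : 2 ≤ q) (hqQ : q ≤ Q) (hr1 : 1 ≤ r) (hr2 : r ≤ q - 1)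
    (hv1 : Q - q < v) (hv2 : v ≤ Q) (hdvd : q ∣ v - r) :
    (q < v ↔ r ≤ Q - q) ∧ v ≠ q := by
  obtain ⟨k, hk⟩ := hdvd
  have trich : k ≤ -1 ∨ k = 0 ∨ 1 ≤ k := by omega
  refine ⟨⟨?_, ?_⟩, ?_⟩
  · intro h
    by_contra hc
    push_neg at hc
    rcases trich with h' | h' | h'
    · nlinarith
    · simp only [h', mul_zero] at hk; omega
    · nlinarith
  · intro h
    rcases trich with h' | h' | h'
    · nlinarith
    · simp only [h', mul_zero] at hk; omega
    · nlinarith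
  · intro h
    rcases trich with h' | h' | h'
    · nlinarith
    · simp only [h', mul_zero] at hk; omega
    · nlinarith

theorem statement8 (Q : ℕ) (hQ : 2 ≤ Q)
    (q q' q'' a a' a'' abar : ℤ)
    (hq : 2 ≤ q) (ha1 : 1 ≤ a) (ha2 : a ≤ q - 1)
    (hq' : 1 ≤ q') (hq'' : 1 ≤ q'')
    (ha'1 : 0 ≤ a') (ha'2 : a' ≤ q') (ha''1 : 0 ≤ a'') (ha''2 : a'' ≤ q'')
    (hco : Int.gcd a q = 1) (hco' : Int.gcd a' q' = 1) (hco'' : Int.gcd a'' q'' = 1)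
    (hcons1 : FareyConsec Q ((a' : ℚ) / (q' : ℚ)) ((a : ℚ) / (q : ℚ)))
    (hcons2 : FareyConsec Q ((a : ℚ) / (q : ℚ)) ((a'' : ℚ) / (q'' : ℚ)))
    (habar1 : 1 ≤ abar) (habar2 : abar ≤ q - 1)
    (habar : Int.ModEq q (a * abar) 1) :
    (q < q' ↔ abar ≤ (Q : ℤ) - q) ∧
    (q' < q ↔ (Q : ℤ) - q < abar) ∧
    (q < q'' ↔ 2 * q - (Q : ℤ) ≤ abar) ∧
    (q'' < q ↔ abar < 2 * q - (Q : ℤ)) ∧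
    (q < min q' q'' ↔ (2 * q - (Q : ℤ) ≤ abar ∧ abar ≤ (Q : ℤ) - q)) ∧
    ((q' < q ∧ q < q'') ↔ max (2 * q - (Q : ℤ)) ((Q : ℤ) - q + 1) ≤ abar) ∧
    ((q'' < q ∧ q < q') ↔ abar ≤ min (2 * q - (Q : ℤ) - 1) ((Q : ℤ) - q)) ∧
    (max q' q'' < q ↔ ((Q : ℤ) - q + 1 ≤ abar ∧ abar ≤ 2 * q - (Q : ℤ) - 1)) := by
  have hq0 : (0:ℚ) < (q:ℚ) := by exact_mod_cast (by omega : (0:ℤ) < q)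
  have hq''0 : (0:ℚ) < (q'':ℚ) := by exact_mod_cast (by omega : (0:ℤ) < q'')
  have hdm : ((((a:ℚ)/(q:ℚ)).den : ℤ)) = q := Rat.den_div_eq_of_coprime (by omega) hco
  have hd' : ((((a':ℚ)/(q':ℚ)).den : ℤ)) = q' := Rat.den_div_eq_of_coprime (by omega) hco'
  have hd'' : ((((a'':ℚ)/(q'':ℚ)).den : ℤ)) = q'' := Rat.den_div_eq_of_coprime (by omega) hco''
  have hqQ : q ≤ (Q:ℤ) := by
    have h := hcons1.2.1.2.2
    have : ((((a:ℚ)/(q:ℚ)).den : ℤ)) ≤ (Q:ℤ) := by exact_mod_cast h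
    omega
  have hq'Q : q' ≤ (Q:ℤ) := by
    have h := hcons1.1.2.2
    have : ((((a':ℚ)/(q':ℚ)).den : ℤ)) ≤ (Q:ℤ) := by exact_mod_cast h
    omega
  have hq''Q : q'' ≤ (Q:ℤ) := by
    have h := hcons2.2.1.2.2
    have : ((((a'':ℚ)/(q'':ℚ)).den : ℤ)) ≤ (Q:ℤ) := by exact_mod_cast h
    omega
  have ha''pos : 1 ≤ a'' := by
    have h := hcons2.2.2.1
    rw [div_lt_div_iff₀ hq0 hq''0] at h
    have hint : a * q'' < a'' * q := by exact_mod_cast h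
    by_contra hc
    push_neg at hc
    nlinarith
  obtain ⟨P1d, P1s⟩ := farey_pair Q a q a' q' (by omega) hq' ha1 (by omega) ha'1 ha'2 hco hco' hcons1
  obtain ⟨P2d, P2s⟩ := farey_pair Q a'' q'' a q hq'' (by omega) ha''pos ha''2 (by omega) (by omega)
    hco'' hco hcons2
  obtain ⟨m, hm⟩ := habar.dvd
  have hcoqa : Int.gcd q a = 1 := by rw [Int.gcd_comm]; exact hco
  have hd1 : q ∣ q' - abar :=
    Int.dvd_of_dvd_mul_left_of_gcd_one ⟨a' + m, by linear_combination P1d + hm⟩ hcoqa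
  have hd2 : q ∣ q'' - (q - abar) :=
    Int.dvd_of_dvd_mul_left_of_gcd_one ⟨a'' - a - m, by linear_combination -P2d - hm⟩ hcoqa
  obtain ⟨l1, n1⟩ := loc Q q q' abar hq hqQ habar1 habar2 (by omega) hq'Q hd1
  obtain ⟨l2, n2⟩ := loc Q q q'' (q - abar) hq hqQ (by omega) (by omega) (by omega) hq''Q hd2
  omega
end

section
/- There is an absolute constant C > 0 such that for every integer Q ≥ 2 and all coprime integers q, a with 2 ≤ q ≤ Q/2 and 1 ≤ a ≤ q−1, one has |ω_{q,a} − 2/(Q·q·(1 + a²/q²))| ≤ C/(Q²·q). -/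
open Real MeasureTheory Set

/-- Free path length in the model with vertical scatterers of half-height `h`. -/
noncomputable def lv (h ω : ℝ) : ℝ :=
  sInf {τ : ℝ | 0 < τ ∧ ∃ p : ℤ × ℤ, p ≠ (0, 0) ∧
    τ * Real.cos ω = (p.1 : ℝ) ∧ |τ * Real.sin ω - (p.2 : ℝ)| ≤ h}

/-- The measure of the set of directions in `[0, π/4)` whose trajectory first
hits the vertical scatterer centered at `(q, a)`. -/
noncomputable def omegaQA (Q : ℕ) (q a : ℤ) : ℝ :=
  (volume {ω ∈ Set.Ico (0 : ℝ) (Real.pi / 4) |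
      lv (1 / (Q : ℝ)) ω * Real.cos ω = (q : ℝ) ∧
      |lv (1 / (Q : ℝ)) ω * Real.sin ω - (a : ℝ)| ≤ 1 / (Q : ℝ)}).toReal

lemma lv_eq (Q : ℕ) (hQ : 2 ≤ Q) (q a : ℤ) (hgcd : Int.gcd a q = 1)
    (hq2 : 2 ≤ q) (hqQ : (q:ℝ) ≤ (Q:ℝ)/2) (ha1 : 1 ≤ a) (haq : a ≤ q - 1)
    (ω : ℝ) (hω0 : 0 ≤ ω) (hω1 : ω < π/4)
    (ht : |(q:ℝ) * Real.tan ω - (a:ℝ)| ≤ 1/(Q:ℝ)) :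
    lv (1/(Q:ℝ)) ω = (q:ℝ) / Real.cos ω := by
  have hπ := pi_pos
  have hQ0 : (0:ℝ) < (Q:ℝ) := by positivity
  have hQ2 : (2:ℝ) ≤ (Q:ℝ) := by exact_mod_cast hQ
  have hq0 : (0:ℝ) < (q:ℝ) := by exact_mod_cast (by omega : (0:ℤ) < q)
  have hcos : 0 < Real.cos ω := Real.cos_pos_of_mem_Ioo ⟨by linarith, by linarith⟩
  have hmem : (q:ℝ) / Real.cos ω ∈ {τ : ℝ | 0 < τ ∧ ∃ p : ℤ × ℤ, p ≠ (0, 0) ∧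
      τ * Real.cos ω = (p.1 : ℝ) ∧ |τ * Real.sin ω - (p.2 : ℝ)| ≤ 1/(Q:ℝ)} := by
    refine ⟨by positivity, (q, a), ?_, ?_, ?_⟩
    · intro hc
      rw [Prod.mk.injEq] at hc
      omega
    · field_simp
    · have : (q:ℝ) / Real.cos ω * Real.sin ω = (q:ℝ) * Real.tan ω := by
        rw [Real.tan_eq_sin_div_cos]; ring
      rw [this]; exact ht
  refine le_antisymm (csInf_le ⟨0, fun τ hτ => hτ.1.le⟩ hmem) (le_csInf ⟨_, hmem⟩ ?_)
  rintro τ ⟨hτ0, ⟨m, n⟩, hp, hcosτ, hsinτ⟩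
  have hm0 : 0 < m := by
    have : (0:ℝ) < (m:ℝ) := by rw [← hcosτ]; positivity
    exact_mod_cast this
  have hτ : τ = (m:ℝ) / Real.cos ω := by
    field_simp
    linarith [hcosτ]
  -- it suffices to show q ≤ m
  have hqm : q ≤ m := by
    by_contra hlt
    push_neg at hlt
    have hm1 : (1:ℝ) ≤ (m:ℝ) := by exact_mod_cast hm0
    have hmq : (m:ℝ) ≤ (q:ℝ) - 1 := by
      have : (m:ℝ) ≤ ((q:ℝ) - 1) := by exact_mod_cast (by omega : m ≤ q - 1)
      exact this
    have hsin' : |(m:ℝ) * Real.tan ω - (n:ℝ)| ≤ 1/(Q:ℝ) := by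
      have : τ * Real.sin ω = (m:ℝ) * Real.tan ω := by
        rw [hτ, Real.tan_eq_sin_div_cos]; ring
      rwa [this] at hsinτ
    -- m*a - n*q is a nonzero integer
    have hne : m * a - n * q ≠ 0 := by
      intro hc
      have hdvd : q ∣ m * a := ⟨n, by linarith [hc]⟩
      have : q ∣ m := (Int.isCoprime_iff_gcd_eq_one.mpr (by rwa [Int.gcd_comm])).dvd_of_dvd_mul_right hdvd
      have := Int.le_of_dvd hm0 this
      omega
    have habs : (1:ℝ) ≤ |(m:ℝ) * (a:ℝ) - (n:ℝ) * (q:ℝ)| := by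
      have h1 : 1 ≤ |m * a - n * q| := Int.one_le_abs hne
      have : (1:ℝ) ≤ (|m * a - n * q| : ℤ) := by exact_mod_cast h1
      rwa [Int.cast_abs, Int.cast_sub, Int.cast_mul, Int.cast_mul] at this
    -- distance estimate
    have key : (1:ℝ)/(q:ℝ) ≤ |(m:ℝ) * ((a:ℝ)/(q:ℝ)) - (n:ℝ)| := by
      have e0 : (m:ℝ) * ((a:ℝ)/(q:ℝ)) - (n:ℝ) = ((m:ℝ) * (a:ℝ) - (n:ℝ) * (q:ℝ)) / (q:ℝ) := by
        field_simp
      rw [e0, abs_div, abs_of_pos hq0]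
      gcongr
    have htri : |(m:ℝ) * ((a:ℝ)/(q:ℝ)) - (n:ℝ)| ≤
        (m:ℝ)/(q:ℝ) * |(q:ℝ) * Real.tan ω - (a:ℝ)| + |(m:ℝ) * Real.tan ω - (n:ℝ)| := by
      have e1 : (m:ℝ) * ((a:ℝ)/(q:ℝ)) - (n:ℝ) =
          -((m:ℝ)/(q:ℝ) * ((q:ℝ) * Real.tan ω - (a:ℝ))) + ((m:ℝ) * Real.tan ω - (n:ℝ)) := by
        field_simp
        ring
      rw [e1]
      refine (abs_add_le _ _).trans ?_
      have hm0' : (0:ℝ) < (m:ℝ) := by exact_mod_cast hm0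
      rw [abs_neg, abs_mul, abs_of_pos (div_pos hm0' hq0)]
    have hbound : |(m:ℝ) * ((a:ℝ)/(q:ℝ)) - (n:ℝ)| < 1/(q:ℝ) := by
      have h1 : (m:ℝ)/(q:ℝ) * |(q:ℝ) * Real.tan ω - (a:ℝ)| ≤ ((q:ℝ)-1)/(q:ℝ) * (1/(Q:ℝ)) := by
        apply mul_le_mul _ ht (abs_nonneg _) (div_nonneg (by linarith) hq0.le)
        gcongr
      have h2 : ((q:ℝ)-1)/(q:ℝ) * (1/(Q:ℝ)) + 1/(Q:ℝ) < 1/(q:ℝ) := by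
        have e : ((q:ℝ)-1)/(q:ℝ) * (1/(Q:ℝ)) + 1/(Q:ℝ) = (2*(q:ℝ)-1)/((q:ℝ)*(Q:ℝ)) := by
          field_simp
          ring
        rw [e, div_lt_div_iff₀ (by positivity) hq0]
        nlinarith
      calc |(m:ℝ) * ((a:ℝ)/(q:ℝ)) - (n:ℝ)| ≤ _ := htri
        _ ≤ ((q:ℝ)-1)/(q:ℝ) * (1/(Q:ℝ)) + 1/(Q:ℝ) := by linarith [hsin']
        _ < 1/(q:ℝ) := h2
    linarith
  rw [hτ]
  gcongr

lemma omegaQA_eq (Q : ℕ) (hQ : 2 ≤ Q) (q a : ℤ) (hgcd : Int.gcd a q = 1)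
    (hq2 : 2 ≤ q) (hqQ : (q:ℝ) ≤ (Q:ℝ)/2) (ha1 : 1 ≤ a) (haq : a ≤ q - 1) :
    omegaQA Q q a = Real.arctan (((a:ℝ) + 1/(Q:ℝ))/(q:ℝ)) -
      Real.arctan (((a:ℝ) - 1/(Q:ℝ))/(q:ℝ)) := by
  have hπ := pi_pos
  have hQ0 : (0:ℝ) < (Q:ℝ) := by positivity
  have hQ2 : (2:ℝ) ≤ (Q:ℝ) := by exact_mod_cast hQ
  have hq0 : (0:ℝ) < (q:ℝ) := by exact_mod_cast (by omega : (0:ℤ) < q)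
  have ha1' : (1:ℝ) ≤ (a:ℝ) := by exact_mod_cast ha1
  have haq' : (a:ℝ) ≤ (q:ℝ) - 1 := by exact_mod_cast (by omega : a ≤ q - 1)
  set α := ((a:ℝ) - 1/(Q:ℝ))/(q:ℝ) with hα
  set β := ((a:ℝ) + 1/(Q:ℝ))/(q:ℝ) with hβ
  have hQinv : (0:ℝ) < 1/(Q:ℝ) := by positivity
  have hQinv2 : (1:ℝ)/(Q:ℝ) ≤ 1/2 := by
    rw [div_le_div_iff₀ hQ0 (by norm_num)]; linarith
  have hα0 : 0 ≤ α := div_nonneg (by linarith) hq0.le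
  have hβ1 : β < 1 := by
    rw [hβ, div_lt_one hq0]; linarith
  have hαβ : α ≤ β := by
    rw [hα, hβ]; gcongr; linarith
  have hset : {ω ∈ Set.Ico (0 : ℝ) (Real.pi / 4) |
      lv (1 / (Q : ℝ)) ω * Real.cos ω = (q : ℝ) ∧
      |lv (1 / (Q : ℝ)) ω * Real.sin ω - (a : ℝ)| ≤ 1 / (Q : ℝ)}
      = Set.Icc (Real.arctan α) (Real.arctan β) := by
    ext ω
    constructor
    · rintro ⟨⟨hω0, hω1⟩, h1, h2⟩
      have hcos : 0 < Real.cos ω := Real.cos_pos_of_mem_Ioo ⟨by linarith, by linarith⟩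
      have hlv : lv (1/(Q:ℝ)) ω = (q:ℝ) / Real.cos ω := by
        rw [eq_div_iff hcos.ne']; exact h1
      have hts : lv (1/(Q:ℝ)) ω * Real.sin ω = (q:ℝ) * Real.tan ω := by
        rw [hlv, Real.tan_eq_sin_div_cos]; ring
      rw [hts] at h2
      obtain ⟨hl, hr⟩ := abs_le.mp h2
      have h3 : α ≤ Real.tan ω := by
        rw [hα, div_le_iff₀ hq0]; nlinarith
      have h4 : Real.tan ω ≤ β := by
        rw [hβ, le_div_iff₀ hq0]; nlinarith
      have hωeq : Real.arctan (Real.tan ω) = ω :=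
        Real.arctan_tan (by linarith) (by linarith)
      constructor
      · calc Real.arctan α ≤ Real.arctan (Real.tan ω) := Real.arctan_strictMono.monotone h3
          _ = ω := hωeq
      · calc ω = Real.arctan (Real.tan ω) := hωeq.symm
          _ ≤ Real.arctan β := Real.arctan_strictMono.monotone h4
    · rintro ⟨h1, h2⟩
      have hω0 : 0 ≤ ω := le_trans (by simpa using Real.arctan_strictMono.monotone hα0) h1
      have hω1 : ω < π/4 := lt_of_le_of_lt h2 (by
        rw [← Real.arctan_one]; exact Real.arctan_strictMono hβ1)
      have hωeq : Real.arctan (Real.tan ω) = ω :=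
        Real.arctan_tan (by linarith) (by linarith)
      have h3 : α ≤ Real.tan ω := by
        apply Real.arctan_strictMono.le_iff_le.mp
        rw [hωeq]; exact h1
      have h4 : Real.tan ω ≤ β := by
        apply Real.arctan_strictMono.le_iff_le.mp
        rw [hωeq]; exact h2
      have ht : |(q:ℝ) * Real.tan ω - (a:ℝ)| ≤ 1/(Q:ℝ) := by
        rw [hα, div_le_iff₀ hq0] at h3
        rw [hβ, le_div_iff₀ hq0] at h4
        rw [abs_le]; constructor <;> nlinarith
      have hcos : 0 < Real.cos ω := Real.cos_pos_of_mem_Ioo ⟨by linarith, by linarith⟩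
      have hlv := lv_eq Q hQ q a hgcd hq2 hqQ ha1 haq ω hω0 hω1 ht
      refine ⟨⟨hω0, hω1⟩, ?_, ?_⟩
      · rw [hlv]; field_simp
      · have : lv (1/(Q:ℝ)) ω * Real.sin ω = (q:ℝ) * Real.tan ω := by
          rw [hlv, Real.tan_eq_sin_div_cos]; ring
        rw [this]; exact ht
  rw [omegaQA, hset, Real.volume_Icc, ENNReal.toReal_ofReal]
  exact sub_nonneg.mpr (Real.arctan_strictMono.monotone hαβ)

set_option maxHeartbeats 1000000 in
theorem statement9 :
    ∃ C > 0, ∀ Q : ℕ, 2 ≤ Q → ∀ q a : ℤ, Int.gcd a q = 1 →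
      2 ≤ q → (q : ℝ) ≤ (Q : ℝ) / 2 → 1 ≤ a → a ≤ q - 1 →
      |omegaQA Q q a - 2 / ((Q : ℝ) * (q : ℝ) * (1 + (a : ℝ) ^ 2 / (q : ℝ) ^ 2))|
        ≤ C / ((Q : ℝ) ^ 2 * (q : ℝ)) := by
  refine ⟨4, by norm_num, ?_⟩
  intro Q hQ q a hgcd hq2 hqQ ha1 haq
  have hQ0 : (0:ℝ) < (Q:ℝ) := by positivity
  have hQ2 : (2:ℝ) ≤ (Q:ℝ) := by exact_mod_cast hQ
  have hq0 : (0:ℝ) < (q:ℝ) := by exact_mod_cast (by omega : (0:ℤ) < q)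
  have hq2' : (2:ℝ) ≤ (q:ℝ) := by exact_mod_cast hq2
  have ha1' : (1:ℝ) ≤ (a:ℝ) := by exact_mod_cast ha1
  have haq' : (a:ℝ) ≤ (q:ℝ) - 1 := by exact_mod_cast (by omega : a ≤ q - 1)
  set α := ((a:ℝ) - 1/(Q:ℝ))/(q:ℝ) with hα
  set β := ((a:ℝ) + 1/(Q:ℝ))/(q:ℝ) with hβ
  set c := (a:ℝ)/(q:ℝ) with hc
  rw [omegaQA_eq Q hQ q a hgcd hq2 hqQ ha1 haq]
  have hQinv2 : (1:ℝ)/(Q:ℝ) ≤ 1/2 := by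
    rw [div_le_div_iff₀ hQ0 (by norm_num)]; linarith
  have hα0 : 0 ≤ α := div_nonneg (by linarith) hq0.le
  have hβ1 : β ≤ 1 := by rw [hβ, div_le_one hq0]; linarith
  have hc1 : c ≤ 1 := by rw [hc, div_le_one hq0]; linarith
  have hc0 : 0 < c := div_pos (by linarith) hq0
  have hQi : (0:ℝ) < 1/(Q:ℝ) := by positivity
  have hαβ : α ≤ β := by rw [hα, hβ]; gcongr; linarith
  have hβc : β - c = 1/((q:ℝ)*(Q:ℝ)) := by
    rw [hβ, hc]; field_simp; ring
  have hcα : c - α = 1/((q:ℝ)*(Q:ℝ)) := by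
    rw [hα, hc]; field_simp; ring
  have hba : β - α = 2/((q:ℝ)*(Q:ℝ)) := by
    rw [hα, hβ]; field_simp; ring
  have hcont : Continuous fun x : ℝ => 1/(1+x^2) := by
    apply Continuous.div continuous_const (by continuity)
    intro x; positivity
  have h1 : IntervalIntegrable (fun x : ℝ => 1/(1+x^2)) volume α β :=
    hcont.intervalIntegrable α β
  have h2 : IntervalIntegrable (fun _ : ℝ => 1/(1+c^2)) volume α β :=
    intervalIntegrable_const
  have hint : ∫ x in α..β, (1:ℝ)/(1+x^2) = Real.arctan β - Real.arctan α :=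
    integral_one_div_one_add_sq
  have hconst : ∫ _x in α..β, (1:ℝ)/(1+c^2) = (β - α) * (1/(1+c^2)) := by
    rw [intervalIntegral.integral_const, smul_eq_mul]
  have hsub : Real.arctan β - Real.arctan α - (β - α) * (1/(1+c^2)) =
      ∫ x in α..β, ((1:ℝ)/(1+x^2) - 1/(1+c^2)) := by
    rw [intervalIntegral.integral_sub h1 h2, hint, hconst]
  have hbd : ∀ x ∈ Set.uIoc α β, ‖(1:ℝ)/(1+x^2) - 1/(1+c^2)‖ ≤ 2/((q:ℝ)*(Q:ℝ)) := by
    intro x hx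
    rw [Set.uIoc_of_le hαβ] at hx
    obtain ⟨hx1, hx2⟩ := hx
    have hx0 : 0 < x := lt_of_le_of_lt hα0 hx1
    have hxc : |x - c| ≤ 1/((q:ℝ)*(Q:ℝ)) := by
      rw [abs_le]; constructor <;> linarith
    have heq : (1:ℝ)/(1+x^2) - 1/(1+c^2) = (c^2 - x^2)/((1+x^2)*(1+c^2)) := by
      have e1 : (1:ℝ)+x^2 ≠ 0 := by positivity
      have e2 : (1:ℝ)+c^2 ≠ 0 := by positivity
      field_simp
      ring
    rw [Real.norm_eq_abs, heq, abs_div]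
    have hden : (1:ℝ) ≤ |(1+x^2)*(1+c^2)| := by
      rw [abs_of_pos (by positivity)]; nlinarith
    have hnum : |c^2 - x^2| ≤ 2/((q:ℝ)*(Q:ℝ)) := by
      have : c^2 - x^2 = (c - x)*(c + x) := by ring
      rw [this, abs_mul]
      have e3 : |c - x| ≤ 1/((q:ℝ)*(Q:ℝ)) := by rwa [abs_sub_comm] at hxc
      have e4 : |c + x| ≤ 2 := by
        rw [abs_of_pos (by linarith)]; linarith
      calc |c - x| * |c + x| ≤ (1/((q:ℝ)*(Q:ℝ))) * 2 :=
            mul_le_mul e3 e4 (abs_nonneg _) (by positivity)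
        _ = 2/((q:ℝ)*(Q:ℝ)) := by ring
    calc |c^2 - x^2| / |(1+x^2)*(1+c^2)| ≤ |c^2 - x^2| / 1 := by
          gcongr
      _ = |c^2 - x^2| := div_one _
      _ ≤ 2/((q:ℝ)*(Q:ℝ)) := hnum
  have hnorm := intervalIntegral.norm_integral_le_of_norm_le_const hbd
  rw [← hsub, Real.norm_eq_abs] at hnorm
  have hmain : (β - α) * (1/(1+c^2)) = 2 / ((Q:ℝ) * (q:ℝ) * (1 + (a:ℝ)^2/(q:ℝ)^2)) := by
    rw [hba, hc, div_pow, div_mul_div_comm, mul_one]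
    ring_nf
  rw [← hmain]
  calc |Real.arctan β - Real.arctan α - (β - α) * (1/(1+c^2))|
      ≤ 2/((q:ℝ)*(Q:ℝ)) * |β - α| := hnorm
    _ = 2/((q:ℝ)*(Q:ℝ)) * (2/((q:ℝ)*(Q:ℝ))) := by
        rw [hba, abs_of_pos (by positivity)]
    _ = 4/((q:ℝ)^2*(Q:ℝ)^2) := by ring
    _ ≤ 4/((Q:ℝ)^2*(q:ℝ)) := by
        rw [div_le_div_iff₀ (by positivity) (by positivity)]
        nlinarith [mul_nonneg (mul_nonneg (pow_pos hQ0 2).le hq0.le)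
          (by linarith : (0:ℝ) ≤ (q:ℝ) - 1)]
end

section
/- There is an absolute constant C > 0 such that for every integer Q ≥ 2 and all coprime integers q, a with Q/2 < q ≤ Q and 1 ≤ a ≤ q−1, writing ā for the multiplicative inverse of a mod q in {1,…,q−1}: (a) if ā ≥ max(2q−Q, Q−q+1) then |ω_{q,a} − (Q−q+ā)/(Q·q·ā·(1+a²/q²))| ≤ C/(Q²·ā); (b) if ā ≤ min(2q−Q−1, Q−q) then |ω_{q,a} − (Q−ā)/(Q·q·(q−ā)·(1+a²/q²))| ≤ C/(Q²·(q−ā)). -/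
set_option maxHeartbeats 1000000


open Real MeasureTheory Set

lemma lv_char (δ : ℝ) (hδ : 0 < δ) (q a : ℤ) (hq : 1 ≤ q) (ω : ℝ)
    (hω : ω ∈ Set.Ico (0 : ℝ) (Real.pi / 4)) :
    (lv δ ω * Real.cos ω = (q : ℝ) ∧ |lv δ ω * Real.sin ω - (a : ℝ)| ≤ δ) ↔
    (|(q : ℝ) * Real.tan ω - (a : ℝ)| ≤ δ ∧
      ∀ n m : ℤ, 1 ≤ n → n < q → δ < |(n : ℝ) * Real.tan ω - (m : ℝ)|) := by
  obtain ⟨hω0, hω4⟩ := hω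
  have hc : 0 < Real.cos ω := by
    apply Real.cos_pos_of_mem_Ioo
    constructor
    · linarith [Real.pi_pos]
    · linarith [Real.pi_pos]
  have htan : Real.tan ω = Real.sin ω / Real.cos ω := Real.tan_eq_sin_div_cos ω
  have hdivtan : ∀ n : ℝ, n / Real.cos ω * Real.sin ω = n * Real.tan ω := by
    intro n; rw [htan]; field_simp
  set S : Set ℝ := {τ : ℝ | 0 < τ ∧ ∃ p : ℤ × ℤ, p ≠ (0, 0) ∧
    τ * Real.cos ω = (p.1 : ℝ) ∧ |τ * Real.sin ω - (p.2 : ℝ)| ≤ δ} with hS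
  set N : Set ℤ := {n : ℤ | 1 ≤ n ∧ ∃ m : ℤ, |(n : ℝ) * Real.tan ω - (m : ℝ)| ≤ δ} with hN
  have hSN : S = (fun n : ℤ => (n : ℝ) / Real.cos ω) '' N := by
    ext τ
    constructor
    · rintro ⟨hτ, ⟨p1, p2⟩, hp0, hp1, hp2⟩
      refine ⟨p1, ⟨?_, p2, ?_⟩, ?_⟩
      · have : (0:ℝ) < (p1 : ℝ) := by rw [← hp1]; positivity
        exact_mod_cast this
      · have hτe : τ = (p1 : ℝ) / Real.cos ω := (eq_div_iff hc.ne').mpr hp1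
        rw [hτe, hdivtan] at hp2
        exact hp2
      · exact ((eq_div_iff hc.ne').mpr hp1).symm
    · rintro ⟨n, ⟨hn1, m, hm⟩, rfl⟩
      have hn0 : (0:ℝ) < (n:ℝ) := by exact_mod_cast hn1
      refine ⟨by positivity, (n, m), ?_, by field_simp, ?_⟩
      · simp only [ne_eq, Prod.mk.injEq, not_and]
        intro h; omega
      · rw [hdivtan]; exact hm
  constructor
  · rintro ⟨h1, h2⟩
    have hSne : S.Nonempty := by
      by_contra h
      rw [Set.not_nonempty_iff_eq_empty] at h
      rw [lv, ← hS, h, Real.sInf_empty, zero_mul] at h1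
      have : (0:ℝ) < (q:ℝ) := by exact_mod_cast hq
      linarith
    have hNne : N.Nonempty := by
      obtain ⟨τ, hτ⟩ := hSne
      rw [hSN] at hτ
      obtain ⟨n, hn, _⟩ := hτ
      exact ⟨n, hn⟩
    obtain ⟨n₀, hn₀, hn₀min⟩ := Int.exists_least_of_bdd
      (P := fun n => n ∈ N) ⟨1, fun z hz => hz.1⟩ hNne
    have hleast : IsLeast S ((n₀ : ℝ) / Real.cos ω) := by
      constructor
      · rw [hSN]; exact ⟨n₀, hn₀, rfl⟩
      · rintro τ hτ
        rw [hSN] at hτ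
        obtain ⟨n, hn, rfl⟩ := hτ
        have h' := hn₀min n hn
        show (n₀ : ℝ) / Real.cos ω ≤ (n : ℝ) / Real.cos ω
        gcongr
    have hinf : lv δ ω = (n₀ : ℝ) / Real.cos ω := hleast.csInf_eq
    have hq0 : q = n₀ := by
      rw [hinf] at h1; field_simp at h1; exact_mod_cast h1.symm
    have hlvq : lv δ ω = (q : ℝ) / Real.cos ω := by rw [hinf, ← hq0]
    rw [hlvq, hdivtan] at h2
    refine ⟨h2, fun n m hn1 hnq => ?_⟩
    by_contra h
    push_neg at h
    have hmem : n ∈ N := ⟨hn1, m, h⟩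
    have := hn₀min n hmem
    omega
  · rintro ⟨h1, h2⟩
    have hqN : q ∈ N := ⟨hq, a, h1⟩
    have hleast : IsLeast S ((q : ℝ) / Real.cos ω) := by
      constructor
      · rw [hSN]; exact ⟨q, hqN, rfl⟩
      · rintro τ hτ
        rw [hSN] at hτ
        obtain ⟨n, ⟨hn1, m, hm⟩, rfl⟩ := hτ
        have hqn : q ≤ n := by
          by_contra h
          push_neg at h
          exact absurd hm (not_le.mpr (h2 n m hn1 h))
        show (q : ℝ) / Real.cos ω ≤ (n : ℝ) / Real.cos ω
        gcongr
    have hinf : lv δ ω = (q : ℝ) / Real.cos ω := hleast.csInf_eq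
    constructor
    · rw [hinf]; field_simp
    · rw [hinf, hdivtan]; exact h1

lemma inner_forall (Qr : ℝ) (q a abar k : ℤ) (hk : a * abar = 1 + q * k)
    (hgcd : Int.gcd a q = 1) (hq3 : 3 ≤ q)
    (ha1 : 1 ≤ a) (haq : a ≤ q - 1)
    (hb1 : 1 ≤ abar) (hbq : abar ≤ q - 1)
    (hQr : 4 ≤ Qr) (hqQr : (q:ℝ) ≤ Qr)
    (t : ℝ) (hθ : |t - (a:ℝ)/(q:ℝ)| ≤ 1/(Qr*(q:ℝ)))
    (hs : (1:ℝ)/Qr < 1/(q:ℝ) + (abar:ℝ) * (t - (a:ℝ)/(q:ℝ)))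
    (hs' : (1:ℝ)/Qr < 1/(q:ℝ) - ((q:ℝ) - (abar:ℝ)) * (t - (a:ℝ)/(q:ℝ))) :
    ∀ n m : ℤ, 1 ≤ n → n < q → (1:ℝ)/Qr < |(n:ℝ) * t - (m:ℝ)| := by
  intro n m hn1 hnq
  have hq0 : (0:ℝ) < (q:ℝ) := by exact_mod_cast lt_of_lt_of_le (by norm_num) hq3
  have hQ0 : (0:ℝ) < Qr := by linarith
  have hq0' : (q:ℝ) ≠ 0 := hq0.ne'
  have hqr : (3:ℝ) ≤ (q:ℝ) := by exact_mod_cast hq3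
  have hδ0 : (0:ℝ) < 1/Qr := by positivity
  obtain ⟨θ, hθdef⟩ : ∃ x : ℝ, x = t - (a:ℝ)/(q:ℝ) := ⟨_, rfl⟩
  rw [← hθdef] at hθ hs hs'
  have hkr : (a:ℝ) * (abar:ℝ) = 1 + (q:ℝ) * (k:ℝ) := by exact_mod_cast hk
  have hup : ∀ c : ℝ, 0 ≤ c → c ≤ (q:ℝ) - 1 → 1/(q:ℝ) + c * |θ| < 1 - 1/Qr := by
    intro c hc0 hc1
    have h1 : c * |θ| ≤ ((q:ℝ) - 1) * (1/(Qr*(q:ℝ))) :=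
      mul_le_mul hc1 hθ (abs_nonneg _) (by linarith)
    have h2 : 1 - 1/Qr - (1/(q:ℝ) + ((q:ℝ)-1) * (1/(Qr*(q:ℝ))))
        = (Qr*(q:ℝ) - Qr - 2*(q:ℝ) + 1)/(Qr*(q:ℝ)) := by
      field_simp; ring
    have h3 : (0:ℝ) < (Qr*(q:ℝ) - Qr - 2*(q:ℝ) + 1)/(Qr*(q:ℝ)) := by
      apply div_pos _ (by positivity)
      nlinarith [mul_le_mul hQr hqr (by norm_num : (0:ℝ) ≤ 3) (by linarith)]
    linarith
  by_cases hn_ab : n = abar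
  · subst hn_ab
    obtain ⟨s, hsdef⟩ : ∃ x : ℝ, x = 1/(q:ℝ) + (n:ℝ) * θ := ⟨_, rfl⟩
    rw [← hsdef] at hs
    have key : (n:ℝ) * t - (m:ℝ) = s + ((k:ℝ) - (m:ℝ)) := by
      have e1 : (n:ℝ) * ((a:ℝ)/(q:ℝ)) = 1/(q:ℝ) + (k:ℝ) := by
        field_simp
        linear_combination hkr
      have e2 : (n:ℝ) * t = (n:ℝ) * θ + (n:ℝ) * ((a:ℝ)/(q:ℝ)) := by rw [hθdef]; ring
      rw [e2, e1]; rw [hsdef]; ring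
    have hbr : (n:ℝ) ≤ (q:ℝ) - 1 := by
      have h : (n:ℝ) ≤ (q:ℝ) - 1 := by exact_mod_cast (show n ≤ q - 1 from hbq)
      linarith
    have hbr0 : (0:ℝ) ≤ (n:ℝ) := by exact_mod_cast le_trans (by norm_num) hn1
    have hsup : s < 1 - 1/Qr := by
      have h4 : (n:ℝ) * θ ≤ (n:ℝ) * |θ| := by
        calc (n:ℝ) * θ ≤ |(n:ℝ) * θ| := le_abs_self _
        _ = (n:ℝ) * |θ| := by rw [abs_mul, abs_of_nonneg hbr0]
      have := hup (n:ℝ) hbr0 hbr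
      rw [hsdef]; linarith
    have hslo : 1/Qr < s := hs
    rw [key]
    rcases lt_trichotomy (k - m) 0 with hj | hj | hj
    · have hjr : (k:ℝ) - (m:ℝ) ≤ -1 := by
        have h : (k:ℝ) - (m:ℝ) ≤ -1 := by exact_mod_cast (show k - m ≤ (-1:ℤ) by omega)
        linarith
      have hneg : s + ((k:ℝ) - (m:ℝ)) < 0 := by linarith
      rw [abs_of_neg hneg]; linarith
    · have hjr : (k:ℝ) - (m:ℝ) = 0 := by
        have h : (k:ℝ) - (m:ℝ) = 0 := by exact_mod_cast (show k - m = (0:ℤ) by omega)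
        linarith
      rw [hjr, add_zero, abs_of_pos (by linarith : (0:ℝ) < s)]
      exact hslo
    · have hjr : (1:ℝ) ≤ (k:ℝ) - (m:ℝ) := by
        have h : (1:ℝ) ≤ (k:ℝ) - (m:ℝ) := by exact_mod_cast (show (1:ℤ) ≤ k - m by omega)
        linarith
      rw [abs_of_pos (by linarith : (0:ℝ) < s + ((k:ℝ) - (m:ℝ)))]
      linarith
  · by_cases hn_qab : n = q - abar
    · subst hn_qab
      obtain ⟨s, hsdef⟩ : ∃ x : ℝ, x = 1/(q:ℝ) - ((q:ℝ) - (abar:ℝ)) * θ := ⟨_, rfl⟩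
      rw [← hsdef] at hs'
      have hcast : ((q - abar : ℤ):ℝ) = (q:ℝ) - (abar:ℝ) := by push_cast; ring
      have key : ((q - abar : ℤ):ℝ) * t - (m:ℝ) = ((a:ℝ) - (k:ℝ) - (m:ℝ)) - s := by
        rw [hcast]
        have e1 : ((q:ℝ) - (abar:ℝ)) * ((a:ℝ)/(q:ℝ)) = (a:ℝ) - (1/(q:ℝ) + (k:ℝ)) := by
          field_simp
          linear_combination -hkr
        have e2 : ((q:ℝ) - (abar:ℝ)) * t
            = ((q:ℝ) - (abar:ℝ)) * θ + ((q:ℝ) - (abar:ℝ)) * ((a:ℝ)/(q:ℝ)) := by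
          rw [hθdef]; ring
        rw [e2, e1, hsdef]; ring
      have hab1 : (1:ℝ) ≤ (abar:ℝ) := by exact_mod_cast hb1
      have habq : (abar:ℝ) ≤ (q:ℝ) - 1 := by
        have h : (abar:ℝ) ≤ (q:ℝ) - 1 := by exact_mod_cast (show abar ≤ q - 1 from hbq)
        linarith
      have hbr : (q:ℝ) - (abar:ℝ) ≤ (q:ℝ) - 1 := by linarith
      have hbr0 : (0:ℝ) ≤ (q:ℝ) - (abar:ℝ) := by linarith
      have hsup : s < 1 - 1/Qr := by
        have h4 : -(((q:ℝ) - (abar:ℝ)) * θ) ≤ ((q:ℝ) - (abar:ℝ)) * |θ| := by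
          calc -(((q:ℝ) - (abar:ℝ)) * θ) ≤ |((q:ℝ) - (abar:ℝ)) * θ| := neg_le_abs _
          _ = ((q:ℝ) - (abar:ℝ)) * |θ| := by rw [abs_mul, abs_of_nonneg hbr0]
        have := hup ((q:ℝ) - (abar:ℝ)) hbr0 hbr
        rw [hsdef]; linarith
      have hslo : 1/Qr < s := hs'
      rw [key]
      rcases lt_trichotomy (a - k - m) 0 with hj | hj | hj
      · have hjr : (a:ℝ) - (k:ℝ) - (m:ℝ) ≤ -1 := by
          have h : (a:ℝ) - (k:ℝ) - (m:ℝ) ≤ -1 := by exact_mod_cast (show a - k - m ≤ (-1:ℤ) by omega)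
          linarith
        have hneg : ((a:ℝ) - (k:ℝ) - (m:ℝ)) - s < 0 := by linarith
        rw [abs_of_neg hneg]; linarith
      · have hjr : (a:ℝ) - (k:ℝ) - (m:ℝ) = 0 := by
          have h : (a:ℝ) - (k:ℝ) - (m:ℝ) = 0 := by exact_mod_cast (show a - k - m = (0:ℤ) by omega)
          linarith
        rw [hjr, zero_sub, abs_neg, abs_of_pos (by linarith : (0:ℝ) < s)]
        exact hslo
      · have hjr : (1:ℝ) ≤ (a:ℝ) - (k:ℝ) - (m:ℝ) := by
          have h : (1:ℝ) ≤ (a:ℝ) - (k:ℝ) - (m:ℝ) := by exact_mod_cast (show (1:ℤ) ≤ a - k - m by omega)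
          linarith
        rw [abs_of_pos (by linarith : (0:ℝ) < ((a:ℝ) - (k:ℝ) - (m:ℝ)) - s)]
        linarith
    · -- generic n
      have hcop : IsCoprime (q:ℤ) a := by
        rw [Int.isCoprime_iff_gcd_eq_one, Int.gcd_comm]
        exact hgcd
      have habs2 : 2 ≤ |n * a - m * q| := by
        rcases (by omega : n * a - m * q ≤ -2 ∨ n * a - m * q = -1 ∨ n * a - m * q = 0
            ∨ n * a - m * q = 1 ∨ 2 ≤ n * a - m * q) with h | h | h | h | h
        · rw [abs_of_nonpos (by omega)]; omega
        · exfalso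
          have h1 : a * (n + abar) = q * (m + k) := by linear_combination hk + h
          have hd : (q:ℤ) ∣ n + abar := hcop.dvd_of_dvd_mul_left ⟨m + k, h1⟩
          have h2 : q ≤ n + abar := Int.le_of_dvd (by omega) hd
          have h3 : n + abar ≤ 2*q - 2 := by omega
          rcases hd with ⟨c, hc⟩
          have hc1 : 1 ≤ c := by
            by_contra hcon
            push_neg at hcon
            have : q * c ≤ 0 := mul_nonpos_of_nonneg_of_nonpos (by omega) (by omega)
            omega
          have hc2 : c < 2 := by
            by_contra hcon
            push_neg at hcon
            have : q * 2 ≤ q * c := mul_le_mul_of_nonneg_left hcon (by omega)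
            omega
          have : c = 1 := by omega
          subst this
          omega
        · exfalso
          have hd : (q:ℤ) ∣ n := hcop.dvd_of_dvd_mul_right ⟨m, by linarith⟩
          have := Int.le_of_dvd (by omega) hd
          omega
        · exfalso
          have h1 : a * (n - abar) = q * (m - k) := by linear_combination h - hk
          have hd : (q:ℤ) ∣ n - abar := hcop.dvd_of_dvd_mul_left ⟨m - k, h1⟩
          rcases hd with ⟨c, hc⟩
          have hc1 : 0 ≤ c := by
            by_contra hcon
            push_neg at hcon
            have : q * c ≤ q * (-1) := mul_le_mul_of_nonneg_left (by omega) (by omega)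
            omega
          have hc2 : c < 1 := by
            by_contra hcon
            push_neg at hcon
            have : q * 1 ≤ q * c := mul_le_mul_of_nonneg_left hcon (by omega)
            omega
          have : c = 0 := by omega
          subst this
          omega
        · rw [abs_of_nonneg (by omega)]; omega
      have keyg : (n:ℝ) * t - (m:ℝ) = (n:ℝ) * θ + ((n * a - m * q : ℤ):ℝ)/(q:ℝ) := by
        have hcd : ((n * a - m * q : ℤ):ℝ) = (n:ℝ)*(a:ℝ) - (m:ℝ)*(q:ℝ) := by push_cast; ring
        rw [hcd, hθdef]
        field_simp
        ring
      have habsr : (2:ℝ) ≤ |((n * a - m * q : ℤ):ℝ)| := by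
        rw [← Int.cast_abs]
        exact_mod_cast habs2
      have hDlow : 2/(q:ℝ) ≤ |((n * a - m * q : ℤ):ℝ)/(q:ℝ)| := by
        rw [abs_div, abs_of_pos hq0]
        gcongr
      have hnr : (n:ℝ) ≤ (q:ℝ) - 1 := by
        have h : (n:ℝ) ≤ (q:ℝ) - 1 := by exact_mod_cast (show n ≤ q - 1 by omega)
        linarith
      have hnr0 : (0:ℝ) ≤ (n:ℝ) := by exact_mod_cast le_trans (by norm_num) hn1
      have h1 : |(n:ℝ)*θ| ≤ ((q:ℝ)-1) * (1/(Qr*(q:ℝ))) := by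
        rw [abs_mul, abs_of_nonneg hnr0]
        exact mul_le_mul hnr hθ (abs_nonneg _) (by linarith)
      have h2 : |((n * a - m * q : ℤ):ℝ)/(q:ℝ)| - |(n:ℝ)*θ| ≤ |(n:ℝ) * t - (m:ℝ)| := by
        rw [keyg]
        calc |((n * a - m * q : ℤ):ℝ)/(q:ℝ)| - |(n:ℝ)*θ|
            = |((n:ℝ)*θ + ((n * a - m * q : ℤ):ℝ)/(q:ℝ)) + (-((n:ℝ)*θ))| - |(n:ℝ)*θ| := by
              ring_nf
        _ ≤ (|(n:ℝ)*θ + ((n * a - m * q : ℤ):ℝ)/(q:ℝ)| + |(-((n:ℝ)*θ))|) - |(n:ℝ)*θ| := by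
              have := abs_add_le ((n:ℝ)*θ + ((n * a - m * q : ℤ):ℝ)/(q:ℝ)) (-((n:ℝ)*θ))
              linarith
        _ = |(n:ℝ)*θ + ((n * a - m * q : ℤ):ℝ)/(q:ℝ)| := by rw [abs_neg]; ring
      have hfin : 2/(q:ℝ) - ((q:ℝ)-1)*(1/(Qr*(q:ℝ))) - 1/Qr
          = (2*Qr - 2*(q:ℝ) + 1)/(Qr*(q:ℝ)) := by
        field_simp; ring
      have hpos : (0:ℝ) < (2*Qr - 2*(q:ℝ) + 1)/(Qr*(q:ℝ)) := by
        apply div_pos (by linarith) (by positivity)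
      linarith

lemma arctan_est (u v x e : ℝ) (h0 : 0 ≤ u) (huv : u ≤ v) (hv1 : v ≤ 1)
    (hx0 : 0 ≤ x) (hx1 : x ≤ 1) (hue : |u - x| ≤ e) (hve : |v - x| ≤ e) :
    |Real.arctan v - Real.arctan u - (v - u)/(1 + x^2)| ≤ (v - u) * (2*e) := by
  have he0 : 0 ≤ e := le_trans (abs_nonneg _) hue
  rcases eq_or_lt_of_le huv with rfl | hlt
  · simp
  · obtain ⟨ξ, hξ, hslope⟩ := exists_hasDerivAt_eq_slope Real.arctan (fun y => 1/(1+y^2)) hlt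
      Real.continuous_arctan.continuousOn (fun y _ => Real.hasDerivAt_arctan y)
    have hveq : Real.arctan v - Real.arctan u = (v - u) * (1/(1+ξ^2)) := by
      rw [hslope]
      rw [mul_comm, div_mul_cancel₀ _ (by linarith : v - u ≠ 0)]
    have hξ1 : ξ ≤ 1 := le_trans hξ.2.le hv1
    have hξ0 : 0 ≤ ξ := le_trans h0 hξ.1.le
    have hξx : |ξ - x| ≤ e := by
      rw [abs_le] at hue hve ⊢
      obtain ⟨h1, h2⟩ := hue
      obtain ⟨h3, h4⟩ := hve
      obtain ⟨h5, h6⟩ := hξ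
      constructor
      · linarith
      · linarith
    have hd : 1/(1+ξ^2) - 1/(1+x^2) = (x^2 - ξ^2)/((1+ξ^2)*(1+x^2)) := by
      field_simp; ring
    have hnum : |x^2 - ξ^2| ≤ 2*e := by
      have heq : x^2 - ξ^2 = (x - ξ)*(x + ξ) := by ring
      rw [heq, abs_mul]
      have h1 : |x - ξ| ≤ e := by rw [abs_sub_comm]; exact hξx
      have h2 : |x + ξ| ≤ 2 := by rw [abs_of_nonneg (by linarith : (0:ℝ) ≤ x + ξ)]; linarith
      calc |x - ξ| * |x + ξ| ≤ e * 2 := mul_le_mul h1 h2 (abs_nonneg _) he0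
      _ = 2*e := by ring
    have hden : (1:ℝ) ≤ (1+ξ^2)*(1+x^2) := by nlinarith [sq_nonneg ξ, sq_nonneg x]
    have hdbound : |1/(1+ξ^2) - 1/(1+x^2)| ≤ 2*e := by
      rw [hd, abs_div, abs_of_pos (by nlinarith : (0:ℝ) < (1+ξ^2)*(1+x^2))]
      rw [div_le_iff₀ (by nlinarith : (0:ℝ) < (1+ξ^2)*(1+x^2))]
      nlinarith [abs_nonneg (x^2 - ξ^2)]
    have hrw : Real.arctan v - Real.arctan u - (v - u)/(1 + x^2)
        = (v - u) * (1/(1+ξ^2) - 1/(1+x^2)) := by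
      rw [hveq]; field_simp
    rw [hrw, abs_mul, abs_of_nonneg (by linarith : (0:ℝ) ≤ v - u)]
    exact mul_le_mul_of_nonneg_left hdbound (by linarith)

lemma vol_sandwich {s : Set ℝ} {u v : ℝ} (huv : u ≤ v)
    (h1 : Set.Ioo u v ⊆ s) (h2 : s ⊆ Set.Icc u v) : (volume s).toReal = v - u := by
  have hle : volume s ≤ volume (Set.Icc u v) := measure_mono h2
  have hge : volume (Set.Ioo u v) ≤ volume s := measure_mono h1
  rw [Real.volume_Icc] at hle
  rw [Real.volume_Ioo] at hge
  have hne : volume s ≠ ⊤ := (lt_of_le_of_lt hle ENNReal.ofReal_lt_top).ne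
  have hub : (volume s).toReal ≤ v - u := by
    calc (volume s).toReal ≤ (ENNReal.ofReal (v - u)).toReal :=
      ENNReal.toReal_mono ENNReal.ofReal_ne_top hle
    _ = v - u := ENNReal.toReal_ofReal (by linarith)
  have hlb : v - u ≤ (volume s).toReal := by
    calc v - u = (ENNReal.ofReal (v - u)).toReal := (ENNReal.toReal_ofReal (by linarith)).symm
    _ ≤ (volume s).toReal := ENNReal.toReal_mono hne hge
  linarith

lemma core (Q : ℕ) (q a abar k : ℤ) (hk : a * abar = 1 + q * k)
    (hgcd : Int.gcd a q = 1) (hq3 : 3 ≤ q) (hQ4 : 4 ≤ (Q:ℤ)) (hqQ : q ≤ (Q:ℤ))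
    (ha1 : 1 ≤ a) (haq : a ≤ q - 1) (hb1 : 1 ≤ abar) (hbq : abar ≤ q - 1) :
    omegaQA Q q a =
      Real.arctan ((a:ℝ)/(q:ℝ)
          + min (1/((Q:ℝ)*(q:ℝ))) (((Q:ℝ)-(q:ℝ))/((Q:ℝ)*(q:ℝ)*((q:ℝ)-(abar:ℝ)))))
      - Real.arctan ((a:ℝ)/(q:ℝ)
          - min (1/((Q:ℝ)*(q:ℝ))) (((Q:ℝ)-(q:ℝ))/((Q:ℝ)*(q:ℝ)*(abar:ℝ)))) := by
  -- real cast facts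
  have hqr : (3:ℝ) ≤ (q:ℝ) := by exact_mod_cast hq3
  have hQr4 : (4:ℝ) ≤ (Q:ℝ) := by exact_mod_cast hQ4
  have hqQr : (q:ℝ) ≤ (Q:ℝ) := by exact_mod_cast hqQ
  have hq0 : (0:ℝ) < (q:ℝ) := by linarith
  have hQ0 : (0:ℝ) < (Q:ℝ) := by linarith
  have har1 : (1:ℝ) ≤ (a:ℝ) := by exact_mod_cast ha1
  have harq : (a:ℝ) ≤ (q:ℝ) - 1 := by exact_mod_cast haq
  have hbr1 : (1:ℝ) ≤ (abar:ℝ) := by exact_mod_cast hb1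
  have hbrq : (abar:ℝ) ≤ (q:ℝ) - 1 := by exact_mod_cast hbq
  have hQq0 : (0:ℝ) ≤ (Q:ℝ) - (q:ℝ) := by linarith
  have hb0 : (0:ℝ) < (abar:ℝ) := by linarith
  have hqb0 : (0:ℝ) < (q:ℝ) - (abar:ℝ) := by linarith
  have hkr : (a:ℝ) * (abar:ℝ) = 1 + (q:ℝ) * (k:ℝ) := by exact_mod_cast hk
  obtain ⟨L, hLdef⟩ : ∃ L : ℝ,
      L = min (1/((Q:ℝ)*(q:ℝ))) (((Q:ℝ)-(q:ℝ))/((Q:ℝ)*(q:ℝ)*(abar:ℝ))) := ⟨_, rfl⟩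
  obtain ⟨R, hRdef⟩ : ∃ R : ℝ,
      R = min (1/((Q:ℝ)*(q:ℝ))) (((Q:ℝ)-(q:ℝ))/((Q:ℝ)*(q:ℝ)*((q:ℝ)-(abar:ℝ)))) := ⟨_, rfl⟩
  rw [← hLdef, ← hRdef]
  have hL0 : 0 ≤ L := by
    rw [hLdef]; exact le_min (by positivity) (div_nonneg hQq0 (by positivity))
  have hR0 : 0 ≤ R := by
    rw [hRdef]; exact le_min (by positivity) (div_nonneg hQq0 (by positivity))
  have hL1 : L ≤ 1/((Q:ℝ)*(q:ℝ)) := by rw [hLdef]; exact min_le_left _ _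
  have hR1 : R ≤ 1/((Q:ℝ)*(q:ℝ)) := by rw [hRdef]; exact min_le_left _ _
  have hident1 : (abar:ℝ) * (((Q:ℝ)-(q:ℝ))/((Q:ℝ)*(q:ℝ)*(abar:ℝ)))
      = ((Q:ℝ)-(q:ℝ))/((Q:ℝ)*(q:ℝ)) := by field_simp
  have hident2 : ((q:ℝ)-(abar:ℝ)) * (((Q:ℝ)-(q:ℝ))/((Q:ℝ)*(q:ℝ)*((q:ℝ)-(abar:ℝ))))
      = ((Q:ℝ)-(q:ℝ))/((Q:ℝ)*(q:ℝ)) := by field_simp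
  have hLa : (abar:ℝ) * L ≤ ((Q:ℝ)-(q:ℝ))/((Q:ℝ)*(q:ℝ)) := by
    rw [hLdef]
    calc (abar:ℝ) * min (1/((Q:ℝ)*(q:ℝ))) (((Q:ℝ)-(q:ℝ))/((Q:ℝ)*(q:ℝ)*(abar:ℝ)))
        ≤ (abar:ℝ) * (((Q:ℝ)-(q:ℝ))/((Q:ℝ)*(q:ℝ)*(abar:ℝ))) :=
          mul_le_mul_of_nonneg_left (min_le_right _ _) (by linarith)
    _ = ((Q:ℝ)-(q:ℝ))/((Q:ℝ)*(q:ℝ)) := hident1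
  have hRb : ((q:ℝ)-(abar:ℝ)) * R ≤ ((Q:ℝ)-(q:ℝ))/((Q:ℝ)*(q:ℝ)) := by
    rw [hRdef]
    calc ((q:ℝ)-(abar:ℝ)) * min (1/((Q:ℝ)*(q:ℝ))) (((Q:ℝ)-(q:ℝ))/((Q:ℝ)*(q:ℝ)*((q:ℝ)-(abar:ℝ))))
        ≤ ((q:ℝ)-(abar:ℝ)) * (((Q:ℝ)-(q:ℝ))/((Q:ℝ)*(q:ℝ)*((q:ℝ)-(abar:ℝ)))) :=
          mul_le_mul_of_nonneg_left (min_le_right _ _) (by linarith)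
    _ = ((Q:ℝ)-(q:ℝ))/((Q:ℝ)*(q:ℝ)) := hident2
  have hxq : (q:ℝ) * ((a:ℝ)/(q:ℝ)) = (a:ℝ) := by field_simp
  have hQl : 1/(q:ℝ) - ((Q:ℝ)-(q:ℝ))/((Q:ℝ)*(q:ℝ)) = 1/(Q:ℝ) := by field_simp; ring
  have hδq : 1/(Q:ℝ) = (q:ℝ) * (1/((Q:ℝ)*(q:ℝ))) := by field_simp
  have h1q : 1/((Q:ℝ)*(q:ℝ)) < 1/(q:ℝ) := by
    apply one_div_lt_one_div_of_lt hq0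
    nlinarith
  have hxlow : 1/(q:ℝ) ≤ (a:ℝ)/(q:ℝ) := by gcongr
  have hxhigh : (a:ℝ)/(q:ℝ) ≤ ((q:ℝ)-1)/(q:ℝ) := by gcongr
  have hxhigh' : ((q:ℝ)-1)/(q:ℝ) = 1 - 1/(q:ℝ) := by field_simp
  have hα0 : 0 < (a:ℝ)/(q:ℝ) - L := by linarith
  have hβ1 : (a:ℝ)/(q:ℝ) + R < 1 := by linarith
  have hαβ : (a:ℝ)/(q:ℝ) - L ≤ (a:ℝ)/(q:ℝ) + R := by linarith
  have hδ0 : (0:ℝ) < 1/(Q:ℝ) := by positivity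
  have hq1 : (1:ℤ) ≤ q := by omega
  have harcle : Real.arctan ((a:ℝ)/(q:ℝ) - L) ≤ Real.arctan ((a:ℝ)/(q:ℝ) + R) :=
    Real.arctan_strictMono.monotone hαβ
  -- the identities for abar and q - abar
  have e1 : ∀ t : ℝ, (abar:ℝ) * t - (k:ℝ) = 1/(q:ℝ) + (abar:ℝ) * (t - (a:ℝ)/(q:ℝ)) := by
    intro t
    field_simp
    linear_combination hkr
  have e2 : ∀ t : ℝ, ((q:ℝ)-(abar:ℝ)) * t - ((a:ℝ)-(k:ℝ))
      = -(1/(q:ℝ) - ((q:ℝ)-(abar:ℝ)) * (t - (a:ℝ)/(q:ℝ))) := by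
    intro t
    have hq' : (q:ℝ)*t - (a:ℝ) = (q:ℝ)*(t - (a:ℝ)/(q:ℝ)) := by rw [mul_sub, hxq]
    linear_combination hq' - e1 t
  unfold omegaQA
  apply vol_sandwich harcle
  · -- inner inclusion
    intro ω hω
    obtain ⟨hω1, hω2⟩ := hω
    have hωpos : 0 < ω := by
      have h := Real.arctan_strictMono hα0
      rw [Real.arctan_zero] at h
      linarith
    have hω4 : ω < π/4 := by
      have h := Real.arctan_strictMono hβ1
      rw [Real.arctan_one] at h
      linarith
    have hpi := Real.pi_pos
    have hmemIoo : ω ∈ Set.Ioo (-(π/2)) (π/2) := ⟨by linarith, by linarith⟩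
    have ht1 : (a:ℝ)/(q:ℝ) - L < Real.tan ω := by
      have h := Real.strictMonoOn_tan
        ⟨Real.neg_pi_div_two_lt_arctan _, Real.arctan_lt_pi_div_two _⟩ hmemIoo hω1
      rwa [Real.tan_arctan] at h
    have ht2 : Real.tan ω < (a:ℝ)/(q:ℝ) + R := by
      have h := Real.strictMonoOn_tan hmemIoo
        ⟨Real.neg_pi_div_two_lt_arctan _, Real.arctan_lt_pi_div_two _⟩ hω2
      rwa [Real.tan_arctan] at h
    have hθ : |Real.tan ω - (a:ℝ)/(q:ℝ)| ≤ 1/((Q:ℝ)*(q:ℝ)) := by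
      rw [abs_le]
      constructor <;> [linarith; linarith]
    refine ⟨⟨le_of_lt hωpos, hω4⟩, ?_⟩
    rw [lv_char (1/(Q:ℝ)) hδ0 q a hq1 ω ⟨le_of_lt hωpos, hω4⟩]
    constructor
    · have heq : (q:ℝ) * Real.tan ω - (a:ℝ) = (q:ℝ) * (Real.tan ω - (a:ℝ)/(q:ℝ)) := by
        rw [mul_sub, hxq]
      rw [heq, abs_mul, abs_of_pos hq0, hδq]
      exact mul_le_mul_of_nonneg_left hθ (by linarith)
    · apply inner_forall (Q:ℝ) q a abar k hk hgcd hq3 ha1 haq hb1 hbq hQr4 hqQr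
        (Real.tan ω) hθ
      · -- hs
        have h5 : (abar:ℝ) * (-L) < (abar:ℝ) * (Real.tan ω - (a:ℝ)/(q:ℝ)) :=
          mul_lt_mul_of_pos_left (by linarith) hb0
        linarith [hLa, hQl, h5]
      · -- hs'
        have h5 : ((q:ℝ)-(abar:ℝ)) * (Real.tan ω - (a:ℝ)/(q:ℝ)) < ((q:ℝ)-(abar:ℝ)) * R :=
          mul_lt_mul_of_pos_left (by linarith) hqb0
        linarith [hRb, hQl, h5]
  · -- outer inclusion
    intro ω hω
    obtain ⟨⟨hω0, hω4⟩, hcond⟩ := hω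
    have hpi := Real.pi_pos
    obtain ⟨h1, h2⟩ := (lv_char (1/(Q:ℝ)) hδ0 q a hq1 ω ⟨hω0, hω4⟩).mp hcond
    have hθ : |Real.tan ω - (a:ℝ)/(q:ℝ)| ≤ 1/((Q:ℝ)*(q:ℝ)) := by
      have heq : Real.tan ω - (a:ℝ)/(q:ℝ) = ((q:ℝ) * Real.tan ω - (a:ℝ))/(q:ℝ) := by
        field_simp
      rw [heq, abs_div, abs_of_pos hq0, div_le_iff₀ hq0]
      rw [hδq] at h1
      linarith [h1]
    obtain ⟨hθlo, hθhi⟩ := abs_le.mp hθ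
    -- lower bound via n = abar
    have hlow2 : -(((Q:ℝ)-(q:ℝ))/((Q:ℝ)*(q:ℝ)*(abar:ℝ))) < Real.tan ω - (a:ℝ)/(q:ℝ) := by
      have hforall := h2 abar k hb1 (by omega)
      rw [e1 (Real.tan ω)] at hforall
      have habs' : (abar:ℝ) * |Real.tan ω - (a:ℝ)/(q:ℝ)| ≤ ((q:ℝ)-1) * (1/((Q:ℝ)*(q:ℝ))) :=
        mul_le_mul hbrq hθ (abs_nonneg _) (by linarith)
      have hmono : -((abar:ℝ) * |Real.tan ω - (a:ℝ)/(q:ℝ)|)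
          ≤ (abar:ℝ) * (Real.tan ω - (a:ℝ)/(q:ℝ)) := by
        have := neg_abs_le (Real.tan ω - (a:ℝ)/(q:ℝ))
        nlinarith [abs_nonneg (Real.tan ω - (a:ℝ)/(q:ℝ))]
      have hqq1 : 1/(q:ℝ) - ((q:ℝ)-1) * (1/((Q:ℝ)*(q:ℝ))) = ((Q:ℝ)-(q:ℝ)+1)/((Q:ℝ)*(q:ℝ)) := by
        field_simp; ring
      have hspos : 0 < 1/(q:ℝ) + (abar:ℝ) * (Real.tan ω - (a:ℝ)/(q:ℝ)) := by
        have hpos' : (0:ℝ) < ((Q:ℝ)-(q:ℝ)+1)/((Q:ℝ)*(q:ℝ)) := by positivity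
        linarith
      rw [abs_of_pos hspos] at hforall
      have hstep : (abar:ℝ) * (-(((Q:ℝ)-(q:ℝ))/((Q:ℝ)*(q:ℝ)*(abar:ℝ))))
          < (abar:ℝ) * (Real.tan ω - (a:ℝ)/(q:ℝ)) := by
        rw [mul_neg, hident1]
        linarith [hQl, hforall]
      exact lt_of_mul_lt_mul_left (by linarith [hstep]) (le_of_lt hb0)
    -- upper bound via n = q - abar
    have hup2 : Real.tan ω - (a:ℝ)/(q:ℝ) < ((Q:ℝ)-(q:ℝ))/((Q:ℝ)*(q:ℝ)*((q:ℝ)-(abar:ℝ))) := by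
      have hforall := h2 (q - abar) (a - k) (by omega) (by omega)
      have hc1 : ((q - abar : ℤ):ℝ) = (q:ℝ) - (abar:ℝ) := by push_cast; ring
      have hc2 : ((a - k : ℤ):ℝ) = (a:ℝ) - (k:ℝ) := by push_cast; ring
      rw [hc1, hc2, e2 (Real.tan ω), abs_neg] at hforall
      have habs' : ((q:ℝ)-(abar:ℝ)) * |Real.tan ω - (a:ℝ)/(q:ℝ)|
          ≤ ((q:ℝ)-1) * (1/((Q:ℝ)*(q:ℝ))) :=
        mul_le_mul (by linarith) hθ (abs_nonneg _) (by linarith)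
      have hmono : ((q:ℝ)-(abar:ℝ)) * (Real.tan ω - (a:ℝ)/(q:ℝ))
          ≤ ((q:ℝ)-(abar:ℝ)) * |Real.tan ω - (a:ℝ)/(q:ℝ)| := by
        nlinarith [le_abs_self (Real.tan ω - (a:ℝ)/(q:ℝ))]
      have hqq1 : 1/(q:ℝ) - ((q:ℝ)-1) * (1/((Q:ℝ)*(q:ℝ))) = ((Q:ℝ)-(q:ℝ)+1)/((Q:ℝ)*(q:ℝ)) := by
        field_simp; ring
      have hspos : 0 < 1/(q:ℝ) - ((q:ℝ)-(abar:ℝ)) * (Real.tan ω - (a:ℝ)/(q:ℝ)) := by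
        have hpos' : (0:ℝ) < ((Q:ℝ)-(q:ℝ)+1)/((Q:ℝ)*(q:ℝ)) := by positivity
        linarith
      rw [abs_of_pos hspos] at hforall
      have hstep : ((q:ℝ)-(abar:ℝ)) * (Real.tan ω - (a:ℝ)/(q:ℝ))
          < ((q:ℝ)-(abar:ℝ)) * (((Q:ℝ)-(q:ℝ))/((Q:ℝ)*(q:ℝ)*((q:ℝ)-(abar:ℝ)))) := by
        rw [hident2]
        linarith [hQl, hforall]
      exact lt_of_mul_lt_mul_left (by linarith [hstep]) (le_of_lt hqb0)
    -- combine
    have htlow : (a:ℝ)/(q:ℝ) - L ≤ Real.tan ω := by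
      rw [hLdef]
      rcases le_total (1/((Q:ℝ)*(q:ℝ))) (((Q:ℝ)-(q:ℝ))/((Q:ℝ)*(q:ℝ)*(abar:ℝ))) with h | h
      · rw [min_eq_left h]; linarith
      · rw [min_eq_right h]; linarith
    have hthigh : Real.tan ω ≤ (a:ℝ)/(q:ℝ) + R := by
      rw [hRdef]
      rcases le_total (1/((Q:ℝ)*(q:ℝ))) (((Q:ℝ)-(q:ℝ))/((Q:ℝ)*(q:ℝ)*((q:ℝ)-(abar:ℝ)))) with h | h
      · rw [min_eq_left h]; linarith
      · rw [min_eq_right h]; linarith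
    have hωtan : Real.arctan (Real.tan ω) = ω := Real.arctan_tan (by linarith) (by linarith)
    constructor
    · calc Real.arctan ((a:ℝ)/(q:ℝ) - L) ≤ Real.arctan (Real.tan ω) :=
        Real.arctan_strictMono.monotone htlow
      _ = ω := hωtan
    · calc ω = Real.arctan (Real.tan ω) := hωtan.symm
      _ ≤ Real.arctan ((a:ℝ)/(q:ℝ) + R) := Real.arctan_strictMono.monotone hthigh

lemma aux1 (K c d : ℝ) (hK : 0 < K) (hc : 0 < c) (hdc : d ≤ c) (hd0 : 0 ≤ d) :
    d/(K*c) ≤ 1/K := by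
  rw [div_le_div_iff₀ (by positivity) hK]
  nlinarith

lemma aux2 (K c d : ℝ) (hK : 0 < K) (hc : 0 < c) (hcd : c ≤ d) : 1/K ≤ d/(K*c) := by
  rw [div_le_div_iff₀ hK (by positivity)]
  nlinarith

lemma aux3 (P b c : ℝ) (hP : 0 < P) (hb : 0 < b) (hc : 1 ≤ c) : 4/(P*c*b) ≤ 100/(P*b) := by
  rw [div_le_div_iff₀ (by positivity) (by positivity)]
  nlinarith [mul_pos hP hb, mul_le_mul_of_nonneg_right hc (le_of_lt (mul_pos hP hb))]


theorem statement10 :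
    ∃ C > 0, ∀ Q : ℕ, 2 ≤ Q → ∀ q a abar : ℤ, Int.gcd a q = 1 →
      (Q : ℝ) / 2 < (q : ℝ) → q ≤ (Q : ℤ) → 1 ≤ a → a ≤ q - 1 →
      1 ≤ abar → abar ≤ q - 1 → Int.ModEq q (a * abar) 1 →
      (max (2 * q - (Q : ℤ)) ((Q : ℤ) - q + 1) ≤ abar →
        |omegaQA Q q a -
            ((Q : ℝ) - (q : ℝ) + (abar : ℝ)) /
              ((Q : ℝ) * (q : ℝ) * (abar : ℝ) * (1 + (a : ℝ) ^ 2 / (q : ℝ) ^ 2))|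
          ≤ C / ((Q : ℝ) ^ 2 * (abar : ℝ))) ∧
      (abar ≤ min (2 * q - (Q : ℤ) - 1) ((Q : ℤ) - q) →
        |omegaQA Q q a -
            ((Q : ℝ) - (abar : ℝ)) /
              ((Q : ℝ) * (q : ℝ) * ((q : ℝ) - (abar : ℝ)) *
                (1 + (a : ℝ) ^ 2 / (q : ℝ) ^ 2))|
          ≤ C / ((Q : ℝ) ^ 2 * ((q : ℝ) - (abar : ℝ)))) := by
  refine ⟨100, by norm_num, ?_⟩
  intro Q hQ q a abar hgcd hQhalf hqQ ha1 haq hb1 hbq hmod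
  obtain ⟨k', hk'⟩ := hmod.dvd
  have hk : a * abar = 1 + q * (-k') := by linear_combination -hk'
  constructor
  · -- case (a)
    intro hrange
    have h1' : 2*q - (Q:ℤ) ≤ abar := le_trans (le_max_left _ _) hrange
    have h2' : (Q:ℤ) - q + 1 ≤ abar := le_trans (le_max_right _ _) hrange
    have hq3 : 3 ≤ q := by omega
    have hQ4 : 4 ≤ (Q:ℤ) := by omega
    have hcore := core Q q a abar (-k') hk hgcd hq3 hQ4 hqQ ha1 haq hb1 hbq
    -- real facts
    have hqr : (3:ℝ) ≤ (q:ℝ) := by exact_mod_cast hq3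
    have hQr4 : (4:ℝ) ≤ (Q:ℝ) := by exact_mod_cast hQ4
    have hqQr : (q:ℝ) ≤ (Q:ℝ) := by exact_mod_cast hqQ
    have hq0 : (0:ℝ) < (q:ℝ) := by linarith
    have hQ0 : (0:ℝ) < (Q:ℝ) := by linarith
    have har1 : (1:ℝ) ≤ (a:ℝ) := by exact_mod_cast ha1
    have harq : (a:ℝ) ≤ (q:ℝ) - 1 := by exact_mod_cast haq
    have hbr1 : (1:ℝ) ≤ (abar:ℝ) := by exact_mod_cast hb1
    have hbrq : (abar:ℝ) ≤ (q:ℝ) - 1 := by exact_mod_cast hbq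
    have h1r : 2*(q:ℝ) - (Q:ℝ) ≤ (abar:ℝ) := by exact_mod_cast h1'
    have h2r : (Q:ℝ) - (q:ℝ) + 1 ≤ (abar:ℝ) := by exact_mod_cast h2'
    have hQq0 : (0:ℝ) ≤ (Q:ℝ) - (q:ℝ) := by linarith
    have hb0 : (0:ℝ) < (abar:ℝ) := by linarith
    have hqb0 : (0:ℝ) < (q:ℝ) - (abar:ℝ) := by linarith
    have hmin1 : min (1/((Q:ℝ)*(q:ℝ))) (((Q:ℝ)-(q:ℝ))/((Q:ℝ)*(q:ℝ)*(abar:ℝ)))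
        = ((Q:ℝ)-(q:ℝ))/((Q:ℝ)*(q:ℝ)*(abar:ℝ)) := by
      apply min_eq_right
      exact aux1 _ _ _ (by positivity) hb0 (by linarith) hQq0
    have hmin2 : min (1/((Q:ℝ)*(q:ℝ))) (((Q:ℝ)-(q:ℝ))/((Q:ℝ)*(q:ℝ)*((q:ℝ)-(abar:ℝ))))
        = 1/((Q:ℝ)*(q:ℝ)) := by
      apply min_eq_left
      exact aux2 _ _ _ (by positivity) hqb0 (by linarith)
    rw [hcore, hmin1, hmin2]
    have hest := arctan_est ((a:ℝ)/(q:ℝ) - ((Q:ℝ)-(q:ℝ))/((Q:ℝ)*(q:ℝ)*(abar:ℝ)))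
        ((a:ℝ)/(q:ℝ) + 1/((Q:ℝ)*(q:ℝ))) ((a:ℝ)/(q:ℝ)) (1/((Q:ℝ)*(q:ℝ)))
        ?hh0 ?hhuv ?hhv1 ?hhx0 ?hhx1 ?hhue ?hhve
    case hh0 => -- 0 ≤ u
      have hL1 : ((Q:ℝ)-(q:ℝ))/((Q:ℝ)*(q:ℝ)*(abar:ℝ)) ≤ 1/((Q:ℝ)*(q:ℝ)) :=
        aux1 _ _ _ (by positivity) hb0 (by linarith) hQq0
      have hxlow : 1/(q:ℝ) ≤ (a:ℝ)/(q:ℝ) := by gcongr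
      have h1q : 1/((Q:ℝ)*(q:ℝ)) < 1/(q:ℝ) := by
        apply one_div_lt_one_div_of_lt hq0; nlinarith
      linarith
    case hhuv => -- u ≤ v
      have := div_nonneg hQq0 (by positivity : (0:ℝ) ≤ (Q:ℝ)*(q:ℝ)*(abar:ℝ))
      have : (0:ℝ) ≤ 1/((Q:ℝ)*(q:ℝ)) := by positivity
      linarith
    case hhv1 => -- v ≤ 1
      have hxhigh : (a:ℝ)/(q:ℝ) ≤ ((q:ℝ)-1)/(q:ℝ) := by gcongr
      have hxhigh' : ((q:ℝ)-1)/(q:ℝ) = 1 - 1/(q:ℝ) := by field_simp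
      have h1q : 1/((Q:ℝ)*(q:ℝ)) < 1/(q:ℝ) := by
        apply one_div_lt_one_div_of_lt hq0; nlinarith
      linarith
    case hhx0 => positivity
    case hhx1 => -- x ≤ 1
      have hxhigh : (a:ℝ)/(q:ℝ) ≤ ((q:ℝ)-1)/(q:ℝ) := by gcongr
      have hxhigh' : ((q:ℝ)-1)/(q:ℝ) = 1 - 1/(q:ℝ) := by field_simp
      have : (0:ℝ) < 1/(q:ℝ) := by positivity
      linarith
    case hhue => -- |u - x| ≤ e
      rw [show (a:ℝ)/(q:ℝ) - ((Q:ℝ)-(q:ℝ))/((Q:ℝ)*(q:ℝ)*(abar:ℝ)) - (a:ℝ)/(q:ℝ)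
          = -(((Q:ℝ)-(q:ℝ))/((Q:ℝ)*(q:ℝ)*(abar:ℝ))) by ring, abs_neg,
        abs_of_nonneg (div_nonneg hQq0 (by positivity))]
      exact aux1 _ _ _ (by positivity) hb0 (by linarith) hQq0
    case hhve => -- |v - x| ≤ e
      rw [show (a:ℝ)/(q:ℝ) + 1/((Q:ℝ)*(q:ℝ)) - (a:ℝ)/(q:ℝ) = 1/((Q:ℝ)*(q:ℝ)) by ring,
        abs_of_nonneg (by positivity)]
    -- main term identity
    have hmain : ((a:ℝ)/(q:ℝ) + 1/((Q:ℝ)*(q:ℝ))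
          - ((a:ℝ)/(q:ℝ) - ((Q:ℝ)-(q:ℝ))/((Q:ℝ)*(q:ℝ)*(abar:ℝ))))/(1 + ((a:ℝ)/(q:ℝ))^2)
        = ((Q:ℝ) - (q:ℝ) + (abar:ℝ)) /
            ((Q:ℝ) * (q:ℝ) * (abar:ℝ) * (1 + (a:ℝ)^2/(q:ℝ)^2)) := by
      rw [div_eq_div_iff (by positivity) (by positivity)]
      field_simp
      ring
    rw [← hmain]
    refine le_trans hest ?_
    -- numeric bound
    have hvu : ((a:ℝ)/(q:ℝ) + 1/((Q:ℝ)*(q:ℝ))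
          - ((a:ℝ)/(q:ℝ) - ((Q:ℝ)-(q:ℝ))/((Q:ℝ)*(q:ℝ)*(abar:ℝ))))
        ≤ 2/((Q:ℝ)*(abar:ℝ)) := by
      have hdiff : 2/((Q:ℝ)*(abar:ℝ))
          - ((a:ℝ)/(q:ℝ) + 1/((Q:ℝ)*(q:ℝ))
            - ((a:ℝ)/(q:ℝ) - ((Q:ℝ)-(q:ℝ))/((Q:ℝ)*(q:ℝ)*(abar:ℝ))))
          = (3*(q:ℝ) - (abar:ℝ) - (Q:ℝ))/((Q:ℝ)*(q:ℝ)*(abar:ℝ)) := by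
        field_simp
        ring
      have hQ2q : (Q:ℝ) ≤ 2*(q:ℝ) - 2 := by linarith
      have hnum : (0:ℝ) ≤ (3*(q:ℝ) - (abar:ℝ) - (Q:ℝ))/((Q:ℝ)*(q:ℝ)*(abar:ℝ)) := by
        apply div_nonneg (by linarith) (by positivity)
      linarith
    have he0 : (0:ℝ) ≤ 2*(1/((Q:ℝ)*(q:ℝ))) := by positivity
    calc ((a:ℝ)/(q:ℝ) + 1/((Q:ℝ)*(q:ℝ))
          - ((a:ℝ)/(q:ℝ) - ((Q:ℝ)-(q:ℝ))/((Q:ℝ)*(q:ℝ)*(abar:ℝ)))) * (2*(1/((Q:ℝ)*(q:ℝ))))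
        ≤ (2/((Q:ℝ)*(abar:ℝ))) * (2*(1/((Q:ℝ)*(q:ℝ)))) :=
          mul_le_mul_of_nonneg_right hvu he0
    _ ≤ 100 / ((Q:ℝ)^2 * (abar:ℝ)) := by
        rw [show (2/((Q:ℝ)*(abar:ℝ))) * (2*(1/((Q:ℝ)*(q:ℝ))))
            = 4/((Q:ℝ)^2*(q:ℝ)*(abar:ℝ)) by field_simp; ring]
        exact aux3 _ _ _ (by positivity) hb0 (by linarith)
  · -- case (b)
    intro hrange
    have h1' : abar ≤ 2*q - (Q:ℤ) - 1 := le_trans hrange (min_le_left _ _)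
    have h2' : abar ≤ (Q:ℤ) - q := le_trans hrange (min_le_right _ _)
    have hq3 : 3 ≤ q := by omega
    have hQ4 : 4 ≤ (Q:ℤ) := by omega
    have hcore := core Q q a abar (-k') hk hgcd hq3 hQ4 hqQ ha1 haq hb1 hbq
    have hqr : (3:ℝ) ≤ (q:ℝ) := by exact_mod_cast hq3
    have hQr4 : (4:ℝ) ≤ (Q:ℝ) := by exact_mod_cast hQ4
    have hqQr : (q:ℝ) ≤ (Q:ℝ) := by exact_mod_cast hqQ
    have hq0 : (0:ℝ) < (q:ℝ) := by linarith
    have hQ0 : (0:ℝ) < (Q:ℝ) := by linarith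
    have har1 : (1:ℝ) ≤ (a:ℝ) := by exact_mod_cast ha1
    have harq : (a:ℝ) ≤ (q:ℝ) - 1 := by exact_mod_cast haq
    have hbr1 : (1:ℝ) ≤ (abar:ℝ) := by exact_mod_cast hb1
    have hbrq : (abar:ℝ) ≤ (q:ℝ) - 1 := by exact_mod_cast hbq
    have h1r : (abar:ℝ) ≤ 2*(q:ℝ) - (Q:ℝ) - 1 := by exact_mod_cast h1'
    have h2r : (abar:ℝ) ≤ (Q:ℝ) - (q:ℝ) := by exact_mod_cast h2'
    have hQq0 : (0:ℝ) ≤ (Q:ℝ) - (q:ℝ) := by linarith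
    have hb0 : (0:ℝ) < (abar:ℝ) := by linarith
    have hqb0 : (0:ℝ) < (q:ℝ) - (abar:ℝ) := by linarith
    have hmin1 : min (1/((Q:ℝ)*(q:ℝ))) (((Q:ℝ)-(q:ℝ))/((Q:ℝ)*(q:ℝ)*(abar:ℝ)))
        = 1/((Q:ℝ)*(q:ℝ)) := by
      apply min_eq_left
      exact aux2 _ _ _ (by positivity) hb0 (by linarith)
    have hmin2 : min (1/((Q:ℝ)*(q:ℝ))) (((Q:ℝ)-(q:ℝ))/((Q:ℝ)*(q:ℝ)*((q:ℝ)-(abar:ℝ))))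
        = ((Q:ℝ)-(q:ℝ))/((Q:ℝ)*(q:ℝ)*((q:ℝ)-(abar:ℝ))) := by
      apply min_eq_right
      exact aux1 _ _ _ (by positivity) hqb0 (by linarith) hQq0
    rw [hcore, hmin1, hmin2]
    have hest := arctan_est ((a:ℝ)/(q:ℝ) - 1/((Q:ℝ)*(q:ℝ)))
        ((a:ℝ)/(q:ℝ) + ((Q:ℝ)-(q:ℝ))/((Q:ℝ)*(q:ℝ)*((q:ℝ)-(abar:ℝ))))
        ((a:ℝ)/(q:ℝ)) (1/((Q:ℝ)*(q:ℝ)))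
        ?hh0 ?hhuv ?hhv1 ?hhx0 ?hhx1 ?hhue ?hhve
    case hh0 => -- 0 ≤ u
      have hxlow : 1/(q:ℝ) ≤ (a:ℝ)/(q:ℝ) := by gcongr
      have h1q : 1/((Q:ℝ)*(q:ℝ)) < 1/(q:ℝ) := by
        apply one_div_lt_one_div_of_lt hq0; nlinarith
      linarith
    case hhuv => -- u ≤ v
      have := div_nonneg hQq0 (by positivity : (0:ℝ) ≤ (Q:ℝ)*(q:ℝ)*((q:ℝ)-(abar:ℝ)))
      have : (0:ℝ) ≤ 1/((Q:ℝ)*(q:ℝ)) := by positivity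
      linarith
    case hhv1 => -- v ≤ 1
      have hxhigh : (a:ℝ)/(q:ℝ) ≤ ((q:ℝ)-1)/(q:ℝ) := by gcongr
      have hxhigh' : ((q:ℝ)-1)/(q:ℝ) = 1 - 1/(q:ℝ) := by field_simp
      have h1q : 1/((Q:ℝ)*(q:ℝ)) < 1/(q:ℝ) := by
        apply one_div_lt_one_div_of_lt hq0; nlinarith
      have hR1 : ((Q:ℝ)-(q:ℝ))/((Q:ℝ)*(q:ℝ)*((q:ℝ)-(abar:ℝ))) ≤ 1/((Q:ℝ)*(q:ℝ)) :=
        aux1 _ _ _ (by positivity) hqb0 (by linarith) hQq0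
      linarith
    case hhx0 => positivity
    case hhx1 =>
      have hxhigh : (a:ℝ)/(q:ℝ) ≤ ((q:ℝ)-1)/(q:ℝ) := by gcongr
      have hxhigh' : ((q:ℝ)-1)/(q:ℝ) = 1 - 1/(q:ℝ) := by field_simp
      have : (0:ℝ) < 1/(q:ℝ) := by positivity
      linarith
    case hhue =>
      rw [show (a:ℝ)/(q:ℝ) - 1/((Q:ℝ)*(q:ℝ)) - (a:ℝ)/(q:ℝ) = -(1/((Q:ℝ)*(q:ℝ))) by ring,
        abs_neg, abs_of_nonneg (by positivity)]
    case hhve =>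
      rw [show (a:ℝ)/(q:ℝ) + ((Q:ℝ)-(q:ℝ))/((Q:ℝ)*(q:ℝ)*((q:ℝ)-(abar:ℝ))) - (a:ℝ)/(q:ℝ)
          = ((Q:ℝ)-(q:ℝ))/((Q:ℝ)*(q:ℝ)*((q:ℝ)-(abar:ℝ))) by ring,
        abs_of_nonneg (div_nonneg hQq0 (by positivity))]
      exact aux1 _ _ _ (by positivity) hqb0 (by linarith) hQq0
    have hmain : ((a:ℝ)/(q:ℝ) + ((Q:ℝ)-(q:ℝ))/((Q:ℝ)*(q:ℝ)*((q:ℝ)-(abar:ℝ)))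
          - ((a:ℝ)/(q:ℝ) - 1/((Q:ℝ)*(q:ℝ))))/(1 + ((a:ℝ)/(q:ℝ))^2)
        = ((Q:ℝ) - (abar:ℝ)) /
            ((Q:ℝ) * (q:ℝ) * ((q:ℝ) - (abar:ℝ)) * (1 + (a:ℝ)^2/(q:ℝ)^2)) := by
      rw [div_eq_div_iff (by positivity) (by positivity)]
      field_simp
      ring
    rw [← hmain]
    refine le_trans hest ?_
    have hvu : ((a:ℝ)/(q:ℝ) + ((Q:ℝ)-(q:ℝ))/((Q:ℝ)*(q:ℝ)*((q:ℝ)-(abar:ℝ)))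
          - ((a:ℝ)/(q:ℝ) - 1/((Q:ℝ)*(q:ℝ))))
        ≤ 2/((Q:ℝ)*((q:ℝ)-(abar:ℝ))) := by
      have hdiff : 2/((Q:ℝ)*((q:ℝ)-(abar:ℝ)))
          - ((a:ℝ)/(q:ℝ) + ((Q:ℝ)-(q:ℝ))/((Q:ℝ)*(q:ℝ)*((q:ℝ)-(abar:ℝ)))
            - ((a:ℝ)/(q:ℝ) - 1/((Q:ℝ)*(q:ℝ))))
          = (2*(q:ℝ) - (Q:ℝ) + (abar:ℝ))/((Q:ℝ)*(q:ℝ)*((q:ℝ)-(abar:ℝ))) := by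
        field_simp
        ring
      have hQ2q : (Q:ℝ) ≤ 2*(q:ℝ) - 2 := by linarith
      have hnum : (0:ℝ) ≤ (2*(q:ℝ) - (Q:ℝ) + (abar:ℝ))/((Q:ℝ)*(q:ℝ)*((q:ℝ)-(abar:ℝ))) := by
        apply div_nonneg (by linarith) (by positivity)
      linarith
    have he0 : (0:ℝ) ≤ 2*(1/((Q:ℝ)*(q:ℝ))) := by positivity
    calc ((a:ℝ)/(q:ℝ) + ((Q:ℝ)-(q:ℝ))/((Q:ℝ)*(q:ℝ)*((q:ℝ)-(abar:ℝ)))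
          - ((a:ℝ)/(q:ℝ) - 1/((Q:ℝ)*(q:ℝ)))) * (2*(1/((Q:ℝ)*(q:ℝ))))
        ≤ (2/((Q:ℝ)*((q:ℝ)-(abar:ℝ)))) * (2*(1/((Q:ℝ)*(q:ℝ)))) :=
          mul_le_mul_of_nonneg_right hvu he0
    _ ≤ 100 / ((Q:ℝ)^2 * ((q:ℝ)-(abar:ℝ))) := by
        rw [show (2/((Q:ℝ)*((q:ℝ)-(abar:ℝ)))) * (2*(1/((Q:ℝ)*(q:ℝ))))
            = 4/((Q:ℝ)^2*(q:ℝ)*((q:ℝ)-(abar:ℝ))) by field_simp; ring]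
        exact aux3 _ _ _ (by positivity) hqb0 (by linarith)
end

section
/- There is an absolute constant C > 0 such that for every integer Q ≥ 2 and all coprime integers q, a with 2Q/3 < q ≤ Q and 1 ≤ a ≤ q−1, if the multiplicative inverse ā of a mod q satisfies Q−q+1 ≤ ā ≤ 2q−Q−1, then |ω_{q,a} − (Q−q)/(Q·ā·(q−ā)·(1+a²/q²))| ≤ C·(1/(Q²·ā) + 1/(Q²·(q−ā))). -/
open Real MeasureTheory Set

lemma lv_set_eq' (h ω : ℝ) (hc : 0 < Real.cos ω) :
    {τ : ℝ | 0 < τ ∧ ∃ p : ℤ × ℤ, p ≠ (0, 0) ∧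
      τ * Real.cos ω = (p.1 : ℝ) ∧ |τ * Real.sin ω - (p.2 : ℝ)| ≤ h} =
    (fun k : ℤ => (k : ℝ) / Real.cos ω) ''
      {k : ℤ | 1 ≤ k ∧ ∃ m : ℤ, |(k : ℝ) * Real.tan ω - (m : ℝ)| ≤ h} := by
  have hc' : Real.cos ω ≠ 0 := ne_of_gt hc
  ext τ
  constructor
  · rintro ⟨hτ, ⟨p1, p2⟩, hp0, h1, h2⟩
    have hp1 : (0:ℝ) < (p1 : ℝ) := h1 ▸ mul_pos hτ hc
    have hp1' : (1:ℤ) ≤ p1 := by exact_mod_cast hp1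
    have hτeq : τ = (p1 : ℝ) / Real.cos ω := by
      field_simp [← h1]; exact h1
    refine ⟨p1, ⟨hp1', p2, ?_⟩, hτeq.symm⟩
    have : τ * Real.sin ω = (p1:ℝ) * Real.tan ω := by
      rw [Real.tan_eq_sin_div_cos, ← h1]; field_simp
    rwa [← this]
  · rintro ⟨k, ⟨hk, m, hm⟩, rfl⟩
    have hk' : (0:ℝ) < (k:ℝ) := by exact_mod_cast lt_of_lt_of_le zero_lt_one hk
    refine ⟨div_pos hk' hc, (k, m), ?_, ?_, ?_⟩
    · intro hp
      have hk0 : k = 0 := congrArg Prod.fst hp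
      rw [hk0] at hk
      exact absurd hk (by norm_num)
    · exact div_mul_cancel₀ _ hc'
    · have : (k:ℝ) / Real.cos ω * Real.sin ω = (k:ℝ) * Real.tan ω := by
        rw [Real.tan_eq_sin_div_cos]; field_simp
      rwa [this]

lemma lv_eq_iff (h ω : ℝ) (hc : 0 < Real.cos ω) (n : ℤ) (hn : 1 ≤ n) :
    lv h ω * Real.cos ω = (n : ℝ) ↔
      ((∃ m : ℤ, |(n:ℝ) * Real.tan ω - (m:ℝ)| ≤ h) ∧
       ∀ k : ℤ, 1 ≤ k → k < n → ∀ m : ℤ, h < |(k:ℝ) * Real.tan ω - (m:ℝ)|) := by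
  have hc' : Real.cos ω ≠ 0 := ne_of_gt hc
  set K := {k : ℤ | 1 ≤ k ∧ ∃ m : ℤ, |(k : ℝ) * Real.tan ω - (m : ℝ)| ≤ h} with hK
  have hS : lv h ω = sInf ((fun k : ℤ => (k : ℝ) / Real.cos ω) '' K) := by
    rw [lv, lv_set_eq' h ω hc]
  constructor
  · intro hlv
    have hnz : (0:ℝ) < (n:ℝ) := by exact_mod_cast lt_of_lt_of_le zero_lt_one hn
    have hKne : K.Nonempty := by
      by_contra hne
      rw [Set.not_nonempty_iff_eq_empty] at hne
      rw [hne, Set.image_empty, Real.sInf_empty] at hS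
      rw [hS, zero_mul] at hlv
      exact hnz.ne (by linarith)
    haveI := Classical.propDecidable
    obtain ⟨k0, hk0K, hk0lb⟩ := Int.exists_least_of_bdd (P := fun k => k ∈ K)
      ⟨1, fun z hz => hz.1⟩ hKne
    have hleast : IsLeast ((fun k : ℤ => (k : ℝ) / Real.cos ω) '' K) ((k0:ℝ) / Real.cos ω) := by
      constructor
      · exact ⟨k0, hk0K, rfl⟩
      · rintro τ ⟨k, hkK, rfl⟩
        have : (k0:ℝ) ≤ (k:ℝ) := by exact_mod_cast hk0lb k hkK
        show _ / Real.cos ω ≤ _ / Real.cos ω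
        rw [div_eq_mul_inv, div_eq_mul_inv]
        exact mul_le_mul_of_nonneg_right this (inv_nonneg.mpr hc.le)
    have hlv' : lv h ω = (k0:ℝ) / Real.cos ω := hS.trans hleast.csInf_eq
    have hk0n' : k0 = n := by
      have h2 := hlv' ▸ hlv
      rw [div_mul_cancel₀ _ hc'] at h2
      exact_mod_cast h2
    subst hk0n'
    refine ⟨hk0K.2, ?_⟩
    intro k hk1 hkn m
    by_contra hle
    push_neg at hle
    have hkK : k ∈ K := ⟨hk1, m, hle⟩
    exact absurd (hk0lb k hkK) (not_le.mpr hkn)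
  · rintro ⟨⟨m, hm⟩, hall⟩
    have hleast : IsLeast ((fun k : ℤ => (k : ℝ) / Real.cos ω) '' K) ((n:ℝ) / Real.cos ω) := by
      constructor
      · exact ⟨n, ⟨hn, m, hm⟩, rfl⟩
      · rintro τ ⟨k, hkK, rfl⟩
        have hnk : n ≤ k := by
          by_contra hlt
          push_neg at hlt
          obtain ⟨m', hm'⟩ := hkK.2
          exact absurd hm' (not_le.mpr (hall k hkK.1 hlt m'))
        have : (n:ℝ) ≤ (k:ℝ) := by exact_mod_cast hnk
        show _ / Real.cos ω ≤ _ / Real.cos ω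
        rw [div_eq_mul_inv, div_eq_mul_inv]
        exact mul_le_mul_of_nonneg_right this (inv_nonneg.mpr hc.le)
    rw [hS, hleast.csInf_eq, div_mul_cancel₀ _ hc']

set_option maxHeartbeats 1000000

lemma pos_of_mul_pos_right' {x q : ℝ} (h : 0 < x * q) (hq : 0 < q) : 0 < x := by
  rcases mul_pos_iff.mp h with ⟨hx, _⟩ | ⟨_, hq'⟩
  · exact hx
  · linarith

lemma neg_of_mul_neg_right' {x q : ℝ} (h : x * q < 0) (hq : 0 < q) : x < 0 := by
  rcases mul_neg_iff.mp h with ⟨hx, hq'⟩ | ⟨hx, _⟩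
  · linarith
  · exact hx

lemma tailstep (X q Q : ℝ) (hq0 : 0 < q) (hQ0 : 0 < Q) (hqQ : q ≤ Q)
    (h4 : 2 - (q - 1)*(1/Q) ≤ X*q) : 1 < X*Q := by
  have h5 : (2 - (q - 1)*(1/Q))*Q ≤ (X*q)*Q := mul_le_mul_of_nonneg_right h4 hQ0.le
  have h7 : (2 - (q - 1)*(1/Q))*Q = 2*Q - (q - 1) := by field_simp
  have hh : (1:ℝ)*q < (X*Q)*q := by nlinarith [h5, h7]
  exact lt_of_mul_lt_mul_right hh hq0.le

lemma key_iff (Q q a ab s : ℤ) (hQ : 2 ≤ Q) (hgcd : Int.gcd a q = 1)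
    (hq1 : 2*Q < 3*q) (hq2 : q ≤ Q) (ha1 : 1 ≤ a) (ha2 : a ≤ q-1)
    (hab1 : 1 ≤ ab) (hab2 : ab ≤ q-1) (hs : a*ab - 1 = q*s)
    (hA : Q - q + 1 ≤ ab) (hB : ab ≤ 2*q - Q - 1) (t : ℝ) :
    (|(q:ℝ)*t - a| ≤ 1/Q ∧ ∀ k : ℤ, 1 ≤ k → k < q → ∀ m : ℤ, 1/(Q:ℝ) < |(k:ℝ)*t - m|)
    ↔ t ∈ Set.Ioo ((a:ℝ)/q + ((q:ℝ) - Q)/(q*Q*ab)) ((a:ℝ)/q + ((Q:ℝ) - q)/(q*Q*((q:ℝ) - ab))) := by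
  have hq0 : (0:ℝ) < q := by exact_mod_cast (by omega : (0:ℤ) < q)
  have hQ0 : (0:ℝ) < Q := by exact_mod_cast (by omega : (0:ℤ) < Q)
  have hab0 : (0:ℝ) < ab := by exact_mod_cast (by omega : (0:ℤ) < ab)
  have hab1R : (1:ℝ) ≤ ab := by exact_mod_cast hab1
  have habq : (ab:ℝ) ≤ (q:ℝ) - 1 := by exact_mod_cast hab2
  have hqab0 : (0:ℝ) < (q:ℝ) - ab := by
    have : ((ab:ℝ)) < q := by exact_mod_cast (by omega : ab < q)
    linarith
  have hqab1R : (1:ℝ) ≤ (q:ℝ) - ab := by linarith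
  have hqQ : (q:ℝ) ≤ Q := by exact_mod_cast hq2
  have hqabq : (q:ℝ) - ab ≤ (q:ℝ) - 1 := by linarith
  have hAR : (Q:ℝ) - q + 1 ≤ ab := by exact_mod_cast hA
  have hBR : (ab:ℝ) ≤ 2*q - Q - 1 := by exact_mod_cast hB
  have hsR : (a:ℝ)*ab - 1 = q*s := by exact_mod_cast hs
  have hcop : IsCoprime (q:ℤ) a := (Int.isCoprime_iff_gcd_eq_one.mpr hgcd).symm
  have hQinv : (Q:ℝ)*(1/Q) = 1 := by field_simp
  -- key linear identities
  have e1 : ((ab:ℝ)*t - s) * q = ab*((q:ℝ)*t - a) + 1 := by linear_combination hsR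
  have e2 : (((q:ℝ) - ab)*t - ((a:ℝ) - s)) * q = ((q:ℝ) - ab)*((q:ℝ)*t - a) - 1 := by
    linear_combination -hsR
  -- rewritten endpoints
  have endl : (a:ℝ)/q + ((q:ℝ) - Q)/(q*Q*ab) = ((a:ℝ)*Q*ab + ((q:ℝ) - Q))/(q*Q*ab) := by
    field_simp
  have endr : (a:ℝ)/q + ((Q:ℝ) - q)/(q*Q*((q:ℝ) - ab))
      = ((a:ℝ)*Q*((q:ℝ) - ab) + ((Q:ℝ) - q))/(q*Q*((q:ℝ) - ab)) := by
    field_simp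
  constructor
  · rintro ⟨hqa, hall⟩
    obtain ⟨hu2, hu1⟩ := abs_le.mp hqa
    constructor
    · -- lower bound, use k = ab, m = s
      have h1 := hall ab hab1 (by omega) s
      have hpos : 0 < ((ab:ℝ)*t - s) * q := by
        rw [e1]
        have hint1 := mul_le_mul_of_nonneg_left hu2 hab0.le
        have hint2 : (ab:ℝ)*(1/Q) < (Q:ℝ)*(1/Q) :=
          mul_lt_mul_of_pos_right (show (ab:ℝ) < Q from by linarith) (by positivity)
        nlinarith [hint1, hint2, hQinv]
      have hpos' : 0 < (ab:ℝ)*t - s := pos_of_mul_pos_right' hpos hq0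
      rcases lt_abs.mp h1 with h | h
      · have h' : (1:ℝ)*q < (((ab:ℝ)*t - s)*Q)*q := by
          rw [div_lt_iff₀ hQ0] at h
          exact mul_lt_mul_of_pos_right (by linarith) hq0
        have e1Q : (((ab:ℝ)*t - s)*Q)*q = ((ab:ℝ)*((q:ℝ)*t - a) + 1)*Q := by
          linear_combination (Q:ℝ) * e1
        rw [endl, div_lt_iff₀ (by positivity : (0:ℝ) < (q:ℝ)*Q*ab)]
        nlinarith [h', e1Q]
      · exfalso
        have : (0:ℝ) < 1/Q := by positivity
        linarith
    · -- upper bound, use k = q - ab, m = a - s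
      have h1 := hall (q - ab) (by omega) (by omega) (a - s)
      push_cast at h1
      have hneg : (((q:ℝ) - ab)*t - ((a:ℝ) - s)) * q < 0 := by
        rw [e2]
        have hint1 := mul_le_mul_of_nonneg_left hu1 hqab0.le
        have hint2 : ((q:ℝ) - ab)*(1/Q) < (Q:ℝ)*(1/Q) :=
          mul_lt_mul_of_pos_right (show (q:ℝ) - ab < Q from by linarith) (by positivity)
        nlinarith [hint1, hint2, hQinv]
      have hneg' : ((q:ℝ) - ab)*t - ((a:ℝ) - s) < 0 := neg_of_mul_neg_right' hneg hq0
      rcases lt_abs.mp h1 with h | h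
      · exfalso
        have : (0:ℝ) < 1/Q := by positivity
        linarith
      · have h' : (1:ℝ)*q < ((-(((q:ℝ) - ab)*t - ((a:ℝ) - s)))*Q)*q := by
          rw [div_lt_iff₀ hQ0] at h
          exact mul_lt_mul_of_pos_right (by linarith) hq0
        have e2Q : ((-(((q:ℝ) - ab)*t - ((a:ℝ) - s)))*Q)*q
            = (1 - ((q:ℝ) - ab)*((q:ℝ)*t - a))*Q := by
          linear_combination (-(Q:ℝ)) * e2
        rw [endr, lt_div_iff₀ (by positivity : (0:ℝ) < (q:ℝ)*Q*((q:ℝ) - ab))]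
        nlinarith [h', e2Q]
  · rintro ⟨h1, h2⟩
    rw [endl, div_lt_iff₀ (by positivity : (0:ℝ) < (q:ℝ)*Q*ab)] at h1
    rw [endr, lt_div_iff₀ (by positivity : (0:ℝ) < (q:ℝ)*Q*((q:ℝ) - ab))] at h2
    -- cleared forms of the interval bounds
    have hu_lb : ((q:ℝ) - Q) < ((q:ℝ)*t - a)*(Q*ab) := by nlinarith [h1]
    have hu_ub : ((q:ℝ)*t - a)*(Q*((q:ℝ) - ab)) < ((Q:ℝ) - q) := by nlinarith [h2]
    -- |q t - a| ≤ 1/Q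
    have hub : ((q:ℝ)*t - a)*Q < 1 := by
      have hh : (((q:ℝ)*t - a)*Q)*((q:ℝ) - ab) < 1*((q:ℝ) - ab) := by
        nlinarith [hu_ub]
      exact lt_of_mul_lt_mul_right hh hqab0.le
    have hlb : -1 < ((q:ℝ)*t - a)*Q := by
      have hh : (-1)*(ab:ℝ) < (((q:ℝ)*t - a)*Q)*ab := by
        nlinarith [hu_lb]
      exact lt_of_mul_lt_mul_right hh hab0.le
    have habs : |(q:ℝ)*t - a| ≤ 1/Q := by
      rw [abs_le]
      constructor
      · rw [show -(1/(Q:ℝ)) = (-1)/Q from by ring, div_le_iff₀ hQ0]; linarith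
      · rw [le_div_iff₀ hQ0]; linarith
    refine ⟨habs, ?_⟩
    intro k hk1 hkq m
    have hk0 : (0:ℝ) < k := by exact_mod_cast (by omega : (0:ℤ) < k)
    have hkq' : (k:ℝ) ≤ (q:ℝ) - 1 := by exact_mod_cast (by omega : k ≤ q - 1)
    set j : ℤ := k*a - m*q with hj
    have e3 : ((k:ℝ)*t - m) * q = (k:ℝ)*((q:ℝ)*t - a) + (j:ℝ) := by
      push_cast [hj]; ring
    have hcase : j = 0 ∨ j = 1 ∨ j = -1 ∨ 2 ≤ j ∨ j ≤ -2 := by omega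
    rcases hcase with h0 | h0 | h0 | h0 | h0
    · -- impossible: q ∣ k
      exfalso
      have hja : k*a = q*m := by rw [hj] at h0; linarith [h0]
      have hdvd : q ∣ k*a := ⟨m, hja⟩
      have hdk : q ∣ k := hcop.dvd_of_dvd_mul_right hdvd
      have := Int.le_of_dvd (by omega) hdk
      omega
    · -- k = ab
      have hj1 : k*a - m*q = 1 := by rw [← hj, h0]
      have hkab : k = ab := by
        have hdvd : q ∣ a*(k - ab) := ⟨m - s, by linear_combination hj1 - hs⟩
        have hdk : q ∣ k - ab := hcop.dvd_of_dvd_mul_left hdvd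
        have h00 : k - ab = 0 := by
          by_contra hne
          have hpos := abs_pos.mpr hne
          have hge := Int.le_of_dvd hpos ((dvd_abs q (k - ab)).mpr hdk)
          have hlt : |k - ab| < q := abs_lt.mpr ⟨by omega, by omega⟩
          linarith
        omega
      subst hkab
      have hxq : ((k:ℝ)*t - m) * q = (k:ℝ)*((q:ℝ)*t - a) + 1 := by
        rw [e3, h0]; norm_num
      have hgt : 1/(Q:ℝ) < (k:ℝ)*t - m := by
        rw [div_lt_iff₀ hQ0]
        have hxqQ : (((k:ℝ)*t - m)*Q)*q = ((k:ℝ)*((q:ℝ)*t - a) + 1)*Q := by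
          linear_combination (Q:ℝ) * hxq
        have hh : (1:ℝ)*q < (((k:ℝ)*t - m)*Q)*q := by
          nlinarith [hu_lb, hxqQ]
        exact lt_of_mul_lt_mul_right hh hq0.le
      exact hgt.trans_le (le_abs_self _)
    · -- k = q - ab
      have hj1 : k*a - m*q = -1 := by rw [← hj, h0]
      have hkab : k = q - ab := by
        have hdvd : q ∣ a*(k - (q - ab)) :=
          ⟨m + s - a, by linear_combination hj1 + hs⟩
        have hdk : q ∣ k - (q - ab) := hcop.dvd_of_dvd_mul_left hdvd
        have h00 : k - (q - ab) = 0 := by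
          by_contra hne
          have hpos := abs_pos.mpr hne
          have hge := Int.le_of_dvd hpos ((dvd_abs q _).mpr hdk)
          have hlt : |k - (q - ab)| < q := abs_lt.mpr ⟨by omega, by omega⟩
          linarith
        omega
      have hkR : (k:ℝ) = (q:ℝ) - ab := by rw [hkab]; push_cast; ring
      have hxq : ((k:ℝ)*t - m) * q = ((q:ℝ) - ab)*((q:ℝ)*t - a) - 1 := by
        rw [e3, h0, hkR]; push_cast; ring
      have hlt : 1/(Q:ℝ) < -((k:ℝ)*t - m) := by
        rw [div_lt_iff₀ hQ0]
        have hxqQ : ((-((k:ℝ)*t - m))*Q)*q = (1 - ((q:ℝ) - ab)*((q:ℝ)*t - a))*Q := by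
          linear_combination (-(Q:ℝ)) * hxq
        have hh : (1:ℝ)*q < ((-((k:ℝ)*t - m))*Q)*q := by
          nlinarith [hu_ub, hxqQ]
        exact lt_of_mul_lt_mul_right hh hq0.le
      exact hlt.trans_le (neg_le_abs _)
    all_goals {
      have hj2 : (2:ℝ) ≤ |(j:ℝ)| := by
        rw [← Int.cast_abs]
        exact_mod_cast (by rcases abs_cases j with ⟨he, _⟩ | ⟨he, _⟩ <;> omega : (2:ℤ) ≤ |j|)
      have hku : abs ((k:ℝ)*((q:ℝ)*t - a)) ≤ ((q:ℝ) - 1)*(1/Q) := by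
        rw [abs_mul, abs_of_pos hk0]
        exact mul_le_mul hkq' habs (abs_nonneg _) (by linarith)
      have h4 : (2:ℝ) - ((q:ℝ) - 1)*(1/Q) ≤ (abs ((k:ℝ)*t - m))*q := by
        have hq' : (abs ((k:ℝ)*t - m))*q = abs ((k:ℝ)*((q:ℝ)*t - a) + j) := by
          rw [← e3, abs_mul, abs_of_pos hq0]
        rw [hq']
        have htri := abs_sub_abs_le_abs_sub ((j:ℝ)) (-((k:ℝ)*((q:ℝ)*t - a)))
        rw [abs_neg] at htri
        have heq : abs ((j:ℝ) - (-((k:ℝ)*((q:ℝ)*t - a)))) = abs ((k:ℝ)*((q:ℝ)*t - a) + j) := by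
          rw [show (j:ℝ) - (-((k:ℝ)*((q:ℝ)*t - a))) = (k:ℝ)*((q:ℝ)*t - a) + j from by ring]
        rw [heq] at htri
        linarith
      rw [div_lt_iff₀ hQ0]
      exact tailstep _ _ _ hq0 hQ0 hqQ h4
    }

lemma tan_Ioo_set (x y : ℝ) (hx : 0 ≤ x) (hy : y ≤ 1) :
    {ω : ℝ | ω ∈ Set.Ico 0 (π/4) ∧ Real.tan ω ∈ Set.Ioo x y}
      = Set.Ioo (arctan x) (arctan y) := by
  ext ω
  simp only [Set.mem_setOf_eq, Set.mem_Ico, Set.mem_Ioo]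
  constructor
  · rintro ⟨⟨h0, h4⟩, htx, hty⟩
    have hω1 : -(π/2) < ω := by linarith [pi_pos]
    have hω2 : ω < π/2 := by linarith [pi_pos]
    have harc : arctan (tan ω) = ω := arctan_tan hω1 hω2
    exact ⟨harc ▸ arctan_strictMono htx, harc ▸ arctan_strictMono hty⟩
  · rintro ⟨hax, hay⟩
    have h0 : 0 ≤ ω := by
      have : (0:ℝ) = arctan 0 := arctan_zero.symm
      have h00 : arctan 0 ≤ arctan x := arctan_strictMono.monotone hx
      linarith [arctan_zero ▸ h00, hax]
    have h4 : ω < π/4 := by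
      have h11 : arctan y ≤ arctan 1 := arctan_strictMono.monotone hy
      rw [arctan_one] at h11
      linarith
    have hωIoo : ω ∈ Set.Ioo (-(π/2)) (π/2) := ⟨by linarith [pi_pos], by linarith [pi_pos]⟩
    refine ⟨⟨h0, h4⟩, ?_, ?_⟩
    · have := Real.strictMonoOn_tan (arctan_mem_Ioo x) hωIoo hax
      rwa [tan_arctan] at this
    · have := Real.strictMonoOn_tan hωIoo (arctan_mem_Ioo y) hay
      rwa [tan_arctan] at this

lemma arctan_approx (x y c d : ℝ) (hd : 0 ≤ d) (hx : c - d ≤ x) (hy : y ≤ c + d)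
    (hxy : x ≤ y) (hc0 : 0 ≤ c) (hc1 : c ≤ 1) (hd1 : d ≤ 1) :
    |(arctan y - arctan x) - (y - x)/(1 + c^2)| ≤ (3*d) * (y - x) := by
  set f : ℝ → ℝ := fun t => arctan t - t/(1 + c^2) with hf
  set f' : ℝ → ℝ := fun t => 1/(1 + t^2) - 1/(1 + c^2) with hf'
  have hder : ∀ t ∈ Set.Icc x y, HasDerivWithinAt f (f' t) (Set.Icc x y) t := by
    intro t ht
    exact ((Real.hasDerivAt_arctan t).sub ((hasDerivAt_id t).div_const (1 + c^2))).hasDerivWithinAt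
  have hbound : ∀ t ∈ Set.Icc x y, ‖f' t‖ ≤ 3*d := by
    intro t ht
    obtain ⟨ht1, ht2⟩ := ht
    have h1c : (0:ℝ) < 1 + c^2 := by positivity
    have h1t : (0:ℝ) < 1 + t^2 := by positivity
    have heq : f' t = ((c - t)*(c + t))/((1 + t^2)*(1 + c^2)) := by
      rw [hf']; field_simp; ring
    rw [Real.norm_eq_abs, heq, abs_div]
    have hden : (1:ℝ) ≤ |(1 + t^2)*(1 + c^2)| := by
      rw [abs_of_pos (by positivity)]
      nlinarith
    have hnum : |(c - t)*(c + t)| ≤ d * 3 := by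
      rw [abs_mul]
      have h5 : |c - t| ≤ d := abs_le.mpr ⟨by linarith, by linarith⟩
      have h6 : |c + t| ≤ 3 := abs_le.mpr ⟨by linarith, by linarith⟩
      exact mul_le_mul h5 h6 (abs_nonneg _) hd
    have hd2 : |(c - t)*(c + t)| / |(1 + t^2)*(1 + c^2)| ≤ |(c - t)*(c + t)| :=
      div_le_self (abs_nonneg _) hden
    linarith
  have hmain := Convex.norm_image_sub_le_of_norm_hasDerivWithin_le hder hbound
      (convex_Icc x y) (Set.left_mem_Icc.mpr hxy) (Set.right_mem_Icc.mpr hxy)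
  rw [Real.norm_eq_abs, Real.norm_eq_abs, abs_of_nonneg (by linarith : (0:ℝ) ≤ y - x)] at hmain
  have hfeq : f y - f x = (arctan y - arctan x) - (y - x)/(1 + c^2) := by
    rw [hf]; ring
  rwa [hfeq] at hmain


theorem statement11 :
    ∃ C > 0, ∀ Q : ℕ, 2 ≤ Q → ∀ q a abar : ℤ, Int.gcd a q = 1 →
      2 * (Q : ℝ) / 3 < (q : ℝ) → q ≤ (Q : ℤ) → 1 ≤ a → a ≤ q - 1 →
      1 ≤ abar → abar ≤ q - 1 → Int.ModEq q (a * abar) 1 →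
      (Q : ℤ) - q + 1 ≤ abar → abar ≤ 2 * q - (Q : ℤ) - 1 →
      |omegaQA Q q a -
          ((Q : ℝ) - (q : ℝ)) /
            ((Q : ℝ) * (abar : ℝ) * ((q : ℝ) - (abar : ℝ)) *
              (1 + (a : ℝ) ^ 2 / (q : ℝ) ^ 2))|
        ≤ C * (1 / ((Q : ℝ) ^ 2 * (abar : ℝ)) +
              1 / ((Q : ℝ) ^ 2 * ((q : ℝ) - (abar : ℝ)))) := by
  refine ⟨3, by norm_num, ?_⟩
  intro Q hQn q a ab hgcd hq1R hq2 ha1 ha2 hab1 hab2 hmod hA hB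
  -- integer facts
  have hq3 : (2:ℤ) ≤ q := by omega
  have hQ2 : (2:ℤ) ≤ (Q:ℤ) := by exact_mod_cast hQn
  have hq1 : 2*(Q:ℤ) < 3*q := by
    have h1 : 2*((Q:ℤ):ℝ) < 3*(q:ℝ) := by push_cast; linarith
    exact_mod_cast h1
  obtain ⟨s0, hs0⟩ : (q:ℤ) ∣ 1 - a*ab := Int.ModEq.dvd hmod
  have hs : a*ab - 1 = q*(-s0) := by linear_combination -hs0
  set s : ℤ := -s0 with hsdef
  -- real facts
  have hq0 : (0:ℝ) < q := by exact_mod_cast (by omega : (0:ℤ) < q)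
  have hQ0 : (0:ℝ) < Q := by exact_mod_cast (by omega : (0:ℕ) < Q)
  have hab0 : (0:ℝ) < ab := by exact_mod_cast (by omega : (0:ℤ) < ab)
  have hqab0 : (0:ℝ) < (q:ℝ) - ab := by
    have : ((ab:ℝ)) < q := by exact_mod_cast (by omega : ab < q)
    linarith
  have hab1R : (1:ℝ) ≤ ab := by exact_mod_cast hab1
  have habq : (ab:ℝ) ≤ (q:ℝ) - 1 := by exact_mod_cast hab2
  have hqab1R : (1:ℝ) ≤ (q:ℝ) - ab := by linarith
  have hqQ : (q:ℝ) ≤ Q := by exact_mod_cast hq2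
  have hAR : (Q:ℝ) - q + 1 ≤ ab := by exact_mod_cast hA
  have hBR : (ab:ℝ) ≤ 2*q - Q - 1 := by exact_mod_cast hB
  have ha1R : (1:ℝ) ≤ a := by exact_mod_cast ha1
  have haqR : (a:ℝ) ≤ (q:ℝ) - 1 := by exact_mod_cast ha2
  -- the interval endpoints
  set x : ℝ := (a:ℝ)/q + ((q:ℝ) - Q)/(q*Q*ab) with hxdef
  set y : ℝ := (a:ℝ)/q + ((Q:ℝ) - q)/(q*Q*((q:ℝ) - ab)) with hydef
  have hxy : x ≤ y := by
    have h1 : ((q:ℝ) - Q)/(q*Q*ab) ≤ 0 := by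
      rw [div_nonpos_iff]; right; exact ⟨by linarith, by positivity⟩
    have h2 : (0:ℝ) ≤ ((Q:ℝ) - q)/(q*Q*((q:ℝ) - ab)) :=
      div_nonneg (by linarith) (by positivity)
    rw [hxdef, hydef]; linarith
  have endlx : x = ((a:ℝ)*Q*ab + ((q:ℝ) - Q))/(q*Q*ab) := by
    rw [hxdef]; field_simp
  have endry : y = ((a:ℝ)*Q*((q:ℝ) - ab) + ((Q:ℝ) - q))/(q*Q*((q:ℝ) - ab)) := by
    rw [hydef]; field_simp
  have hx0 : 0 ≤ x := by
    rw [endlx]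
    apply div_nonneg ?_ (by positivity)
    have hint1 : 1*((Q:ℝ)*ab) ≤ a*((Q:ℝ)*ab) :=
      mul_le_mul_of_nonneg_right ha1R (by positivity)
    have hint2 : (ab:ℝ)*1 ≤ ab*Q := by
      apply mul_le_mul_of_nonneg_left (by linarith) hab0.le
    nlinarith [hint1, hint2]
  have hy1 : y ≤ 1 := by
    rw [endry, div_le_one (by positivity)]
    have hint1 : (a:ℝ)*((Q:ℝ)*((q:ℝ) - ab)) ≤ ((q:ℝ) - 1)*((Q:ℝ)*((q:ℝ) - ab)) :=
      mul_le_mul_of_nonneg_right haqR (by positivity)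
    have hint2 : (1:ℝ)*((q:ℝ) - ab) ≤ Q*((q:ℝ) - ab) :=
      mul_le_mul_of_nonneg_right (by linarith : (1:ℝ) ≤ Q) hqab0.le
    nlinarith [hint1, hint2]
  -- key characterization of the set
  have hkey : ∀ t : ℝ,
      (|(q:ℝ)*t - a| ≤ 1/(Q:ℝ) ∧ ∀ k : ℤ, 1 ≤ k → k < q → ∀ m : ℤ, 1/(Q:ℝ) < |(k:ℝ)*t - m|)
      ↔ t ∈ Set.Ioo x y := by
    intro t
    have h := key_iff (Q:ℤ) q a ab s hQ2 hgcd hq1 hq2 ha1 ha2 hab1 hab2 hs hA hB t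
    simpa only [Int.cast_natCast] using h
  -- the set equality
  have hseteq : {ω ∈ Set.Ico (0 : ℝ) (Real.pi / 4) |
      lv (1 / (Q : ℝ)) ω * Real.cos ω = (q : ℝ) ∧
      |lv (1 / (Q : ℝ)) ω * Real.sin ω - (a : ℝ)| ≤ 1 / (Q : ℝ)}
      = Set.Ioo (arctan x) (arctan y) := by
    rw [← tan_Ioo_set x y hx0 hy1]
    ext ω
    simp only [Set.mem_setOf_eq, Set.sep_setOf, Set.mem_Ico]
    constructor
    · rintro ⟨⟨h0, h4⟩, hlc, hls⟩
      have hcos : 0 < Real.cos ω :=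
        Real.cos_pos_of_mem_Ioo ⟨by linarith [pi_pos], by linarith [pi_pos]⟩
      obtain ⟨-, hall⟩ := (lv_eq_iff (1/(Q:ℝ)) ω hcos q (by omega)).mp hlc
      have hlv : lv (1/(Q:ℝ)) ω = (q:ℝ)/Real.cos ω := by
        field_simp [← hlc]; exact hlc
      have hsin : lv (1/(Q:ℝ)) ω * Real.sin ω = (q:ℝ) * Real.tan ω := by
        rw [hlv, Real.tan_eq_sin_div_cos]; field_simp
      rw [hsin] at hls
      exact ⟨⟨h0, h4⟩, (hkey (Real.tan ω)).mp ⟨hls, hall⟩⟩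
    · rintro ⟨⟨h0, h4⟩, htan⟩
      have hcos : 0 < Real.cos ω :=
        Real.cos_pos_of_mem_Ioo ⟨by linarith [pi_pos], by linarith [pi_pos]⟩
      obtain ⟨habs, hall⟩ := (hkey (Real.tan ω)).mpr htan
      have hlc : lv (1/(Q:ℝ)) ω * Real.cos ω = (q:ℝ) :=
        (lv_eq_iff (1/(Q:ℝ)) ω hcos q (by omega)).mpr ⟨⟨a, habs⟩, hall⟩
      have hlv : lv (1/(Q:ℝ)) ω = (q:ℝ)/Real.cos ω := by
        field_simp [← hlc]; exact hlc
      have hsin : lv (1/(Q:ℝ)) ω * Real.sin ω = (q:ℝ) * Real.tan ω := by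
        rw [hlv, Real.tan_eq_sin_div_cos]; field_simp
      exact ⟨⟨h0, h4⟩, hlc, by rw [hsin]; exact habs⟩
  -- compute the measure
  have homega : omegaQA Q q a = arctan y - arctan x := by
    rw [omegaQA, hseteq, Real.volume_Ioo, ENNReal.toReal_ofReal
      (by linarith [arctan_strictMono.monotone hxy] : (0:ℝ) ≤ arctan y - arctan x)]
  -- identify the main term
  have hyx : y - x = ((Q:ℝ) - q)/((Q:ℝ)*ab*((q:ℝ) - ab)) := by
    rw [hxdef, hydef]; field_simp; ring
  have hM : ((Q:ℝ) - q) / ((Q:ℝ)*ab*((q:ℝ) - ab)*(1 + (a:ℝ)^2/(q:ℝ)^2))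
      = (y - x)/(1 + ((a:ℝ)/q)^2) := by
    rw [hyx, div_pow, div_div]
  -- apply the arctan approximation
  have happrox : |(arctan y - arctan x) - (y - x)/(1 + ((a:ℝ)/q)^2)|
      ≤ (3*(1/((q:ℝ)*Q))) * (y - x) := by
    apply arctan_approx x y ((a:ℝ)/q) (1/((q:ℝ)*Q)) (by positivity) ?_ ?_ hxy ?_ ?_ ?_
    · -- c - d ≤ x
      have heq : x - ((a:ℝ)/q - 1/((q:ℝ)*Q)) = ((q:ℝ) - Q + ab)/(q*Q*ab) := by
        rw [hxdef]; field_simp; ring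
      have hpos : (0:ℝ) ≤ ((q:ℝ) - Q + ab)/(q*Q*ab) :=
        div_nonneg (by linarith) (by positivity)
      linarith
    · -- y ≤ c + d
      have heq : ((a:ℝ)/q + 1/((q:ℝ)*Q)) - y = (((q:ℝ) - ab) - ((Q:ℝ) - q))/(q*Q*((q:ℝ) - ab)) := by
        rw [hydef]; field_simp; ring
      have hpos : (0:ℝ) ≤ (((q:ℝ) - ab) - ((Q:ℝ) - q))/(q*Q*((q:ℝ) - ab)) :=
        div_nonneg (by linarith) (by positivity)
      linarith
    · positivity
    · rw [div_le_one hq0]; linarith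
    · rw [div_le_one (by positivity)]; nlinarith
  rw [homega, hM]
  -- final comparison
  have hfinal : (3*(1/((q:ℝ)*Q))) * (y - x)
      ≤ 3 * (1 / ((Q:ℝ)^2*ab) + 1 / ((Q:ℝ)^2*((q:ℝ) - ab))) := by
    rw [hyx]
    have he : (3*(1/((q:ℝ)*Q))) * (((Q:ℝ) - q)/((Q:ℝ)*ab*((q:ℝ) - ab)))
        = (3*((Q:ℝ) - q))/((q:ℝ)*(Q:ℝ)^2*ab*((q:ℝ) - ab)) := by
      rw [eq_div_iff (by positivity)]
      field_simp
    rw [he]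
    have h10 : (Q:ℝ) - q ≤ q*((q:ℝ) - ab) := by nlinarith
    have h11 : (3*((Q:ℝ) - q))/((q:ℝ)*(Q:ℝ)^2*ab*((q:ℝ) - ab)) ≤ 3/((Q:ℝ)^2*ab) := by
      rw [div_le_div_iff₀ (by positivity) (by positivity)]
      nlinarith [mul_le_mul_of_nonneg_right h10 (show (0:ℝ) ≤ 3*((Q:ℝ)^2*ab) by positivity)]
    have h12 : (0:ℝ) ≤ 1/((Q:ℝ)^2*((q:ℝ) - ab)) := by positivity
    have h13 : 3/((Q:ℝ)^2*ab) = 3*(1/((Q:ℝ)^2*ab)) := by ring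
    linarith [h11, h13 ▸ h11]
  exact happrox.trans hfinal
end
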